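/- arXiv:0809.3813 — 6 statements merged into one kernel-verified Lean document; each statement's English description precedes it below -/
import Mathlib

section
/- For every dimension d ≥ 1, every integer t ≥ 1, and every nonempty finite subset X of the unitary group U(d), the inequality (1/|X|²) · ∑_{U,V ∈ X} |tr(U*V)|^{2t} ≥ ∫_{U(d)} |tr(U)|^{2t} dU holds, where the integral is with respect to the Haar probability measure on U(d). -/
open MeasureTheory
open scoped ENNReal

noncomputable section

/-- `U(d)`: the group of `d × d` complex unitary matrices. -/
abbrev UG (d : ℕ) := Matrix.unitaryGroup (Fin d) ℂ

instance (d : ℕ) : MeasurableSpace (UG d) := borel _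
instance (d : ℕ) : BorelSpace (UG d) := ⟨rfl⟩

/-- `Hom(r,s)`: the complex span of the monomial functions on `U(d)` that are homogeneous of
degree `r` in the entries of `U` and of degree `s` in the entries of `U*` (conjugates). -/
def homSpace (d r s : ℕ) : Submodule ℂ (UG d → ℂ) :=
  Submodule.span ℂ
    {f : UG d → ℂ | ∃ (i j : Fin r → Fin d) (p q : Fin s → Fin d),
      f = fun U : UG d => (∏ k, (U : Matrix (Fin d) (Fin d) ℂ) (i k) (j k)) *
        ∏ k, (starRingEnd ℂ) ((U : Matrix (Fin d) (Fin d) ℂ) (p k) (q k))}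

/-- A nonempty finite subset `X ⊆ U(d)` is a unitary `t`-design (with respect to the Haar
probability measure `μ`) if it averages every `f ∈ Hom(t,t)` correctly. -/
def IsUnitaryDesign (d t : ℕ) (μ : Measure (UG d)) (X : Finset (UG d)) : Prop :=
  X.Nonempty ∧ ∀ f ∈ homSpace d t t,
    (1 / (X.card : ℂ)) * ∑ U ∈ X, f U = ∫ U, f U ∂μ

/-- `|tr(U* M)|²`, the squared trace inner product of two unitaries. -/
def trIP {d : ℕ} (U M : UG d) : ℝ :=
  ‖Matrix.trace (star (U : Matrix (Fin d) (Fin d) ℂ) *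
    (M : Matrix (Fin d) (Fin d) ℂ))‖ ^ 2

-- compactness
instance instCompactUG (d : ℕ) : CompactSpace (UG d) := by
  apply isCompact_iff_compactSpace.mp
  have hsub : (Matrix.unitaryGroup (Fin d) ℂ : Set (Matrix (Fin d) (Fin d) ℂ)) ⊆
      Set.univ.pi fun _ : Fin d => Set.univ.pi fun _ : Fin d => Metric.closedBall (0:ℂ) 1 := by
    intro A hA
    intro i _
    intro j _
    simpa using entry_norm_bound_of_unitary hA i j
  have hcomp : IsCompact (Set.univ.pi fun _ : Fin d => Set.univ.pi fun _ : Fin d =>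
      Metric.closedBall (0:ℂ) 1 : Set (Matrix (Fin d) (Fin d) ℂ)) :=
    isCompact_univ_pi fun _ => isCompact_univ_pi fun _ => isCompact_closedBall _ _
  have hclosed : IsClosed (Matrix.unitaryGroup (Fin d) ℂ : Set (Matrix (Fin d) (Fin d) ℂ)) := by
    have : (Matrix.unitaryGroup (Fin d) ℂ : Set (Matrix (Fin d) (Fin d) ℂ)) =
        ((fun A : Matrix (Fin d) (Fin d) ℂ => star A * A) ⁻¹' {1}) ∩
        ((fun A : Matrix (Fin d) (Fin d) ℂ => A * star A) ⁻¹' {1}) := by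
      ext A
      simp [Unitary.mem_iff, Set.mem_preimage, Set.mem_inter_iff]
    rw [this]
    exact ((isClosed_singleton.preimage
        ((continuous_id.matrix_conjTranspose).matrix_mul continuous_id)).inter
      (isClosed_singleton.preimage
        (continuous_id.matrix_mul continuous_id.matrix_conjTranspose)))
  exact hcomp.of_isClosed_subset hclosed hsub

instance instContinuousInvUG (d : ℕ) : ContinuousInv (UG d) := by
  constructor
  apply continuous_induced_rng.2
  have : (Subtype.val ∘ fun U : UG d => U⁻¹) = fun U : UG d =>
      star (U : Matrix (Fin d) (Fin d) ℂ) := by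
    funext U
    simp only [Function.comp_apply, ← Unitary.star_eq_inv]
    rfl
  rw [this]
  exact continuous_star.comp continuous_subtype_val

instance instTopGroupUG (d : ℕ) : IsTopologicalGroup (UG d) := ⟨⟩

section Invariance
variable {d : ℕ} (μ : Measure (UG d)) [μ.IsHaarMeasure] [IsProbabilityMeasure μ]

lemma UG_right_invariant : μ.IsMulRightInvariant := by
  constructor
  intro g
  set ν : Measure (UG d) := μ.map (· * g) with hν
  haveI : IsProbabilityMeasure ν :=
    Measure.isProbabilityMeasure_map (measurable_mul_const g).aemeasurable
  haveI : ν.IsMulLeftInvariant := by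
    constructor
    intro h
    rw [hν, Measure.map_map (measurable_const_mul h) (measurable_mul_const g)]
    have : ((h * ·) ∘ (· * g)) = ((· * g) ∘ (h * ·)) := by
      funext x; simp [mul_assoc]
    rw [this, ← Measure.map_map (measurable_mul_const g) (measurable_const_mul h),
      map_mul_left_eq_self]
  have hs : ν = Measure.haarScalarFactor ν μ • μ :=
    Measure.isMulInvariant_eq_smul_of_compactSpace ν μ
  have hc : Measure.haarScalarFactor ν μ = 1 := by
    have huniv : ν Set.univ = (Measure.haarScalarFactor ν μ : ℝ≥0∞) * μ Set.univ := by
      conv_lhs => rw [hs]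
      rw [Measure.smul_apply, ENNReal.smul_def, smul_eq_mul]
    simp only [measure_univ, mul_one] at huniv
    exact_mod_cast huniv.symm
  rw [hs, hc, one_smul]

lemma UG_inv_invariant : μ.IsInvInvariant := by
  haveI := UG_right_invariant μ
  constructor
  haveI : IsProbabilityMeasure μ.inv := by
    constructor
    rw [Measure.inv, Measure.map_apply measurable_inv MeasurableSet.univ]
    simp
  haveI : μ.inv.IsMulLeftInvariant := inferInstance
  have hs : μ.inv = Measure.haarScalarFactor μ.inv μ • μ :=
    Measure.isMulInvariant_eq_smul_of_compactSpace μ.inv μ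
  have hc : Measure.haarScalarFactor μ.inv μ = 1 := by
    have huniv : μ.inv Set.univ = (Measure.haarScalarFactor μ.inv μ : ℝ≥0∞) * μ Set.univ := by
      conv_lhs => rw [hs]
      rw [Measure.smul_apply, ENNReal.smul_def, smul_eq_mul]
    simp only [measure_univ, mul_one] at huniv
    exact_mod_cast huniv.symm
  rw [hs, hc, one_smul]

end Invariance

section Rep
open Matrix
variable {d t : ℕ}

abbrev Idx (d t : ℕ) := (Fin t → Fin d) × (Fin t → Fin d)

/-- The matrix of `U^{⊗t} ⊗ conj(U)^{⊗t}` in the standard basis. -/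
def piRep (d t : ℕ) (U : UG d) : Matrix (Idx d t) (Idx d t) ℂ :=
  Matrix.of fun a b =>
    (∏ k, (U : Matrix (Fin d) (Fin d) ℂ) (a.1 k) (b.1 k)) *
      ∏ k, (starRingEnd ℂ) ((U : Matrix (Fin d) (Fin d) ℂ) (a.2 k) (b.2 k))

lemma piRep_mul (U V : UG d) : piRep d t (U * V) = piRep d t U * piRep d t V := by
  ext a b
  simp only [piRep, Matrix.mul_apply, Matrix.of_apply, Submonoid.coe_mul]
  calc (∏ k, ((U : Matrix (Fin d) (Fin d) ℂ) * V) (a.1 k) (b.1 k)) *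
        ∏ k, (starRingEnd ℂ) (((U : Matrix (Fin d) (Fin d) ℂ) * V) (a.2 k) (b.2 k))
      = (∑ c1 : Fin t → Fin d, ∏ k, (U : Matrix (Fin d) (Fin d) ℂ) (a.1 k) (c1 k) *
            (V : Matrix (Fin d) (Fin d) ℂ) (c1 k) (b.1 k)) *
        ∑ c2 : Fin t → Fin d, ∏ k, (starRingEnd ℂ) ((U : Matrix (Fin d) (Fin d) ℂ) (a.2 k) (c2 k)) *
            (starRingEnd ℂ) ((V : Matrix (Fin d) (Fin d) ℂ) (c2 k) (b.2 k)) := by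
        congr 1
        · simp only [Matrix.mul_apply]
          rw [Finset.prod_univ_sum, Fintype.piFinset_univ]
        · simp only [Matrix.mul_apply, map_sum]
          rw [Finset.prod_univ_sum, Fintype.piFinset_univ]
          simp [_root_.map_mul]
    _ = ∑ c : Idx d t,
          ((∏ k, (U : Matrix (Fin d) (Fin d) ℂ) (a.1 k) (c.1 k)) *
            ∏ k, (starRingEnd ℂ) ((U : Matrix (Fin d) (Fin d) ℂ) (a.2 k) (c.2 k))) *
          ((∏ k, (V : Matrix (Fin d) (Fin d) ℂ) (c.1 k) (b.1 k)) *
            ∏ k, (starRingEnd ℂ) ((V : Matrix (Fin d) (Fin d) ℂ) (c.2 k) (b.2 k))) := by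
        rw [Finset.sum_mul_sum, Fintype.sum_prod_type]
        apply Finset.sum_congr rfl; intro c1 _
        apply Finset.sum_congr rfl; intro c2 _
        rw [Finset.prod_mul_distrib, Finset.prod_mul_distrib]
        ring

lemma piRep_star (U : UG d) : piRep d t (star U) = (piRep d t U)ᴴ := by
  ext a b
  simp only [piRep, Matrix.of_apply, Matrix.conjTranspose_apply, Unitary.coe_star,
    Matrix.star_apply, star_mul', map_prod]
  simp only [RCLike.star_def, map_prod]

lemma piRep_inv (U : UG d) : piRep d t U⁻¹ = (piRep d t U)ᴴ := by
  rw [← Unitary.star_eq_inv, piRep_star]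

lemma trace_piRep (U : UG d) :
    (piRep d t U).trace =
      ((‖(U : Matrix (Fin d) (Fin d) ℂ).trace‖ ^ (2 * t) : ℝ) : ℂ) := by
  classical
  have h1 : (piRep d t U).trace =
      (∑ c1 : Fin t → Fin d, ∏ k, (U : Matrix (Fin d) (Fin d) ℂ) (c1 k) (c1 k)) *
      ∑ c2 : Fin t → Fin d, ∏ k, (starRingEnd ℂ) ((U : Matrix (Fin d) (Fin d) ℂ) (c2 k) (c2 k)) := by
    rw [Matrix.trace, Finset.sum_mul_sum, Fintype.sum_prod_type]
    simp [piRep, Matrix.diag]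
  have key : ∀ f : Fin d → ℂ, (∑ c : Fin t → Fin d, ∏ k, f (c k)) = (∑ i, f i) ^ t := by
    intro f
    rw [← Fintype.piFinset_univ, ← Finset.prod_univ_sum, Finset.prod_const, Finset.card_univ,
      Fintype.card_fin]
  have h2 : (∑ c1 : Fin t → Fin d, ∏ k, (U : Matrix (Fin d) (Fin d) ℂ) (c1 k) (c1 k)) =
      ((U : Matrix (Fin d) (Fin d) ℂ).trace) ^ t :=
    key fun i => (U : Matrix (Fin d) (Fin d) ℂ) i i
  have h3 : (∑ c2 : Fin t → Fin d, ∏ k, (starRingEnd ℂ) ((U : Matrix (Fin d) (Fin d) ℂ) (c2 k) (c2 k))) =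
      ((starRingEnd ℂ) ((U : Matrix (Fin d) (Fin d) ℂ).trace)) ^ t := by
    rw [Matrix.trace, map_sum]
    exact key fun i => (starRingEnd ℂ) ((U : Matrix (Fin d) (Fin d) ℂ).diag i)
  rw [h1, h2, h3, ← mul_pow, Complex.mul_conj]
  norm_cast
  rw [pow_mul, Complex.sq_norm]

lemma continuous_piRep (a b : Idx d t) :
    Continuous fun U : UG d => piRep d t U a b := by
  apply Continuous.mul
  · apply continuous_finset_prod
    intro k _
    exact ((continuous_apply _).comp ((continuous_apply _).comp continuous_subtype_val))
  · apply continuous_finset_prod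
    intro k _
    exact Complex.continuous_conj.comp
      ((continuous_apply _).comp ((continuous_apply _).comp continuous_subtype_val))

end Rep

open Matrix in
theorem stmt_0 (d t : ℕ) (hd : 1 ≤ d) (ht : 1 ≤ t)
    (μ : Measure (UG d)) [μ.IsHaarMeasure] [IsProbabilityMeasure μ]
    (X : Finset (UG d)) (hX : X.Nonempty) :
    (1 / (X.card : ℝ) ^ 2) *
        ∑ U ∈ X, ∑ V ∈ X,
          ‖Matrix.trace (star (U : Matrix (Fin d) (Fin d) ℂ) *
            (V : Matrix (Fin d) (Fin d) ℂ))‖ ^ (2 * t)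
      ≥ ∫ U, ‖Matrix.trace (U : Matrix (Fin d) (Fin d) ℂ)‖ ^ (2 * t) ∂μ := by
  classical
  haveI := UG_inv_invariant μ
  set n : ℕ := X.card with hn
  have hn0 : 0 < n := Finset.card_pos.mpr hX
  have hnC : (n : ℂ) ≠ 0 := Nat.cast_ne_zero.mpr hn0.ne'
  set P : UG d → Matrix (Idx d t) (Idx d t) ℂ := piRep d t with hP
  have hint : ∀ a b : Idx d t, Integrable (fun U : UG d => P U a b) μ := fun a b =>
    (continuous_piRep a b).integrable_of_hasCompactSupport
      (HasCompactSupport.of_compactSpace _)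
  set S : Matrix (Idx d t) (Idx d t) ℂ := ((n : ℂ))⁻¹ • ∑ U ∈ X, P U with hS
  set T : Matrix (Idx d t) (Idx d t) ℂ :=
    Matrix.of (fun a b => ∫ U, P U a b ∂μ) with hT
  -- left absorption
  have hWT : ∀ W : UG d, P W * T = T := by
    intro W
    ext a b
    calc (P W * T) a b = ∑ c, P W a c * ∫ U, P U c b ∂μ := by
          simp [Matrix.mul_apply, hT]
      _ = ∑ c, ∫ U, P W a c * P U c b ∂μ := by
          exact Finset.sum_congr rfl fun c _ => (integral_const_mul _ _).symm
      _ = ∫ U, ∑ c, P W a c * P U c b ∂μ :=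
          (integral_finset_sum _ fun c _ => ((hint c b).const_mul _)).symm
      _ = ∫ U, P (W * U) a b ∂μ := by
          congr 1; funext U
          rw [hP, piRep_mul, Matrix.mul_apply]
      _ = ∫ U, P U a b ∂μ := integral_mul_left_eq_self (fun V : UG d => P V a b) W
      _ = T a b := rfl
  -- T is Hermitian
  have hTh : Tᴴ = T := by
    ext a b
    calc Tᴴ a b = (starRingEnd ℂ) (∫ U, P U b a ∂μ) := rfl
      _ = ∫ U, (starRingEnd ℂ) (P U b a) ∂μ := (integral_conj).symm
      _ = ∫ U, P U⁻¹ a b ∂μ := by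
          congr 1; funext U
          rw [hP, piRep_inv]; rfl
      _ = ∫ U, P U a b ∂μ := integral_inv_eq_self (fun V : UG d => P V a b) μ
      _ = T a b := rfl
  -- T * T = T
  have hTT : T * T = T := by
    ext a b
    calc (T * T) a b = ∑ c, (∫ U, P U a c ∂μ) * T c b := by
          simp [Matrix.mul_apply, hT]
      _ = ∑ c, ∫ U, P U a c * T c b ∂μ := by
          exact Finset.sum_congr rfl fun c _ => (integral_mul_const _ _).symm
      _ = ∫ U, ∑ c, P U a c * T c b ∂μ :=
          (integral_finset_sum _ fun c _ => ((hint a c).mul_const _)).symm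
      _ = ∫ U, (P U * T) a b ∂μ := by
          simp [Matrix.mul_apply]
      _ = ∫ _U, T a b ∂μ := by
          congr 1; funext U; rw [hWT U]
      _ = T a b := by simp
  -- S * T = T
  have hST : S * T = T := by
    rw [hS, Matrix.smul_mul, Finset.sum_mul]
    have : ∀ U ∈ X, P U * T = T := fun U _ => hWT U
    rw [Finset.sum_congr rfl this, Finset.sum_const, ← hn,
      ← Nat.cast_smul_eq_nsmul ℂ n T, smul_smul, inv_mul_cancel₀ hnC, one_smul]
  -- trace of P U * (P V)ᴴ
  have htr1 : ∀ U V : UG d, (P U * (P V)ᴴ).trace =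
      ((‖(star (V : Matrix (Fin d) (Fin d) ℂ) *
        (U : Matrix (Fin d) (Fin d) ℂ)).trace‖ ^ (2 * t) : ℝ) : ℂ) := by
    intro U V
    rw [hP, ← piRep_star, ← piRep_mul, trace_piRep]
    congr 3
    have hcoe : ((U * star V : UG d) : Matrix (Fin d) (Fin d) ℂ)
        = (U : Matrix (Fin d) (Fin d) ℂ) * star (V : Matrix (Fin d) (Fin d) ℂ) := by
      rw [Submonoid.coe_mul]
      congr 1
    rw [hcoe, Matrix.trace_mul_comm]
  -- trace of S * Sᴴ
  have hSS : (S * Sᴴ).trace = ((n : ℂ))⁻¹ * ((n : ℂ))⁻¹ *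
      ∑ U ∈ X, ∑ V ∈ X, ((‖(star (U : Matrix (Fin d) (Fin d) ℂ) *
        (V : Matrix (Fin d) (Fin d) ℂ)).trace‖ ^ (2 * t) : ℝ) : ℂ) := by
    have hSh : Sᴴ = ((n : ℂ))⁻¹ • ∑ V ∈ X, (P V)ᴴ := by
      rw [hS, Matrix.conjTranspose_smul, Matrix.conjTranspose_sum]
      congr 1
      simp
    have hprod : S * Sᴴ = (((n : ℂ))⁻¹ * ((n : ℂ))⁻¹) •
        ∑ U ∈ X, ∑ V ∈ X, P U * (P V)ᴴ := by
      rw [hS, hSh, Matrix.smul_mul, Matrix.mul_smul, smul_smul, Finset.sum_mul]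
      congr 1
      exact Finset.sum_congr rfl fun U _ => Matrix.mul_sum _ _ _
    rw [hprod, Matrix.trace_smul, Matrix.trace_sum]
    simp only [Matrix.trace_sum, htr1, smul_eq_mul]
    rw [Finset.sum_comm]
  -- trace of T
  have hTtr : T.trace =
      ∫ U, ((‖(U : Matrix (Fin d) (Fin d) ℂ).trace‖ ^ (2 * t) : ℝ) : ℂ) ∂μ := by
    calc T.trace = ∑ a, ∫ U, P U a a ∂μ := by
          simp [Matrix.trace, Matrix.diag, hT]
      _ = ∫ U, ∑ a, P U a a ∂μ := (integral_finset_sum _ fun a _ => hint a a).symm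
      _ = ∫ U, ((‖(U : Matrix (Fin d) (Fin d) ℂ).trace‖ ^ (2 * t) : ℝ) : ℂ) ∂μ := by
          congr 1; funext U
          rw [← trace_piRep (U := U)]
          simp [Matrix.trace, Matrix.diag, hP]
  -- the difference matrix
  set D : Matrix (Idx d t) (Idx d t) ℂ := S - T with hD
  have e1 : S * Tᴴ = T := by rw [hTh, hST]
  have e2 : T * Sᴴ = T := by
    calc T * Sᴴ = (S * Tᴴ)ᴴ := by
          rw [Matrix.conjTranspose_mul, Matrix.conjTranspose_conjTranspose]
      _ = Tᴴ := by rw [e1]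
      _ = T := hTh
  have e3 : T * Tᴴ = T := by rw [hTh, hTT]
  have hDexp : (D * Dᴴ).trace = (S * Sᴴ).trace - T.trace := by
    have hDD : D * Dᴴ = S * Sᴴ - T := by
      rw [hD, Matrix.conjTranspose_sub, Matrix.sub_mul, Matrix.mul_sub, Matrix.mul_sub, e1, e2, e3]
      abel
    rw [hDD, Matrix.trace_sub]
  have hpos : ∃ r : ℝ, 0 ≤ r ∧ (D * Dᴴ).trace = (r : ℂ) := by
    refine ⟨∑ a, ∑ b, Complex.normSq (D a b), ?_, ?_⟩
    · apply Finset.sum_nonneg; intro a _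
      apply Finset.sum_nonneg; intro b _
      exact Complex.normSq_nonneg _
    · simp only [Matrix.trace, Matrix.diag, Matrix.mul_apply, Matrix.conjTranspose_apply,
        RCLike.star_def, Complex.mul_conj]
      push_cast
      rfl
  obtain ⟨r, hr0, hr⟩ := hpos
  have hIR : ∫ U, ((‖(U : Matrix (Fin d) (Fin d) ℂ).trace‖ ^ (2 * t) : ℝ) : ℂ) ∂μ
      = ((∫ U, ‖(U : Matrix (Fin d) (Fin d) ℂ).trace‖ ^ (2 * t) ∂μ : ℝ) : ℂ) := by
    exact integral_ofReal
  rw [hDexp, hSS, hTtr, hIR] at hr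
  have hA : ((n : ℂ))⁻¹ * ((n : ℂ))⁻¹ *
      ∑ U ∈ X, ∑ V ∈ X, ((‖(star (U : Matrix (Fin d) (Fin d) ℂ) *
        (V : Matrix (Fin d) (Fin d) ℂ)).trace‖ ^ (2 * t) : ℝ) : ℂ)
      = (((1 / (n : ℝ) ^ 2) * ∑ U ∈ X, ∑ V ∈ X,
        ‖(star (U : Matrix (Fin d) (Fin d) ℂ) *
          (V : Matrix (Fin d) (Fin d) ℂ)).trace‖ ^ (2 * t) : ℝ) : ℂ) := by
    push_cast
    ring
  rw [hA, ← Complex.ofReal_sub] at hr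
  have hkey : (1 / (n : ℝ) ^ 2) * ∑ U ∈ X, ∑ V ∈ X,
        ‖(star (U : Matrix (Fin d) (Fin d) ℂ) *
          (V : Matrix (Fin d) (Fin d) ℂ)).trace‖ ^ (2 * t)
      - (∫ U, ‖(U : Matrix (Fin d) (Fin d) ℂ).trace‖ ^ (2 * t) ∂μ) = r := by
    exact_mod_cast hr
  rw [ge_iff_le]
  linarith
end
end

section
/- For every d ≥ 1 and every nonnegative integer r, the dimension of Hom(r,0) for U(d) equals the binomial coefficient C(d²+r−1, r); that is, the complex span of the functions U ↦ ∏_{k=1}^{r} U_{i_k j_k} (over all index tuples) in the space of functions U(d) → ℂ has dimension C(d²+r−1, r). -/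
open MeasureTheory

noncomputable section

open Filter Topology Matrix

theorem aux_poly_analytic {ι : Type} [Fintype ι] (P : MvPolynomial ι ℂ) (z : ι → ℂ) :
    AnalyticAt ℂ (fun x : ι → ℂ => MvPolynomial.eval x P) z := by
  induction P using MvPolynomial.induction_on with
  | C a => simp only [MvPolynomial.eval_C]; exact analyticAt_const
  | add p q hp hq => simp only [map_add]; exact hp.add hq
  | mul_X p i hp =>
    simp only [_root_.map_mul, MvPolynomial.eval_X]
    exact hp.mul ((ContinuousLinearMap.proj i : ((ι → ℂ)) →L[ℂ] ℂ).analyticAt z)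

def skewB (d : ℕ) (p : Fin d × Fin d) : Matrix (Fin d) (Fin d) ℂ :=
  if p.1 < p.2 then single p.1 p.2 1 - single p.2 p.1 1
  else if p.2 < p.1 then Complex.I • (single p.1 p.2 1 + single p.2 p.1 1)
  else Complex.I • single p.1 p.1 1

theorem stdBasis_conjT (d : ℕ) (i j : Fin d) (c : ℂ) :
    (single i j c)ᴴ = single j i (star c) := by
  ext a b
  simp only [conjTranspose_apply, single, of_apply]
  rw [apply_ite (star : ℂ → ℂ)]
  simp [and_comm]

theorem skewB_skew (d : ℕ) (p : Fin d × Fin d) : (skewB d p)ᴴ = -skewB d p := by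
  obtain ⟨a, b⟩ := p
  rcases lt_trichotomy a b with h | h | h
  · have e1 : skewB d (a, b) = single a b 1 - single b a 1 := if_pos h
    rw [e1, conjTranspose_sub, stdBasis_conjT, stdBasis_conjT]
    simp [neg_sub]
  · subst h
    have e1 : skewB d (a, a) = Complex.I • single a a 1 := by
      rw [skewB, if_neg (lt_irrefl a), if_neg (lt_irrefl a)]
    rw [e1, conjTranspose_smul, stdBasis_conjT]
    simp [Complex.star_def, Complex.conj_I]
  · have e1 : skewB d (a, b)
        = Complex.I • (single a b 1 + single b a 1) := by
      rw [skewB, if_neg (not_lt.2 h.le), if_pos h]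
    rw [e1, conjTranspose_smul, conjTranspose_add, stdBasis_conjT, stdBasis_conjT]
    simp [Complex.star_def, Complex.conj_I, add_comm]

theorem skewB_span (d : ℕ) : Submodule.span ℂ (Set.range (skewB d)) = ⊤ := by
  rw [eq_top_iff]
  intro W _
  have hstd : ∀ a b : Fin d, single a b (1:ℂ) ∈ Submodule.span ℂ (Set.range (skewB d)) := by
    intro a b
    have mem1 : ∀ p, skewB d p ∈ Submodule.span ℂ (Set.range (skewB d)) :=
      fun p => Submodule.subset_span ⟨p, rfl⟩
    rcases lt_trichotomy a b with h | h | h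
    · have e1 : skewB d (a, b) = single a b 1 - single b a 1 := if_pos h
      have e2 : skewB d (b, a)
          = Complex.I • (single b a 1 + single a b 1) := by
        rw [skewB, if_neg (not_lt.2 h.le), if_pos h]
      have key : single a b (1:ℂ)
          = (2⁻¹ : ℂ) • skewB d (a, b) + (-(Complex.I)/2) • skewB d (b, a) := by
        rw [e1, e2, smul_smul]
        have : (-(Complex.I)/2) * Complex.I = 2⁻¹ := by
          field_simp [Complex.I_mul_I]
          simp [sq]
        rw [this]
        module
      rw [key]
      exact add_mem (Submodule.smul_mem _ _ (mem1 _)) (Submodule.smul_mem _ _ (mem1 _))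
    · subst h
      have e1 : skewB d (a, a) = Complex.I • single a a 1 := by
        rw [skewB, if_neg (lt_irrefl a), if_neg (lt_irrefl a)]
      have key : single a a (1:ℂ) = (-(Complex.I)) • skewB d (a, a) := by
        rw [e1, smul_smul]
        have : -(Complex.I) * Complex.I = 1 := by
          rw [neg_mul, Complex.I_mul_I, neg_neg]
        rw [this, one_smul]
      rw [key]
      exact Submodule.smul_mem _ _ (mem1 _)
    · have e1 : skewB d (b, a) = single b a 1 - single a b 1 := if_pos h
      have e2 : skewB d (a, b)
          = Complex.I • (single a b 1 + single b a 1) := by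
        rw [skewB, if_neg (not_lt.2 h.le), if_pos h]
      have key : single a b (1:ℂ)
          = (-(2⁻¹) : ℂ) • skewB d (b, a) + (-(Complex.I)/2) • skewB d (a, b) := by
        rw [e1, e2, smul_smul]
        have : (-(Complex.I)/2) * Complex.I = 2⁻¹ := by
          field_simp [Complex.I_mul_I]
          simp [sq]
        rw [this]
        module
      rw [key]
      exact add_mem (Submodule.smul_mem _ _ (mem1 _)) (Submodule.smul_mem _ _ (mem1 _))
  rw [matrix_eq_sum_single W]
  refine Submodule.sum_mem _ fun i _ => Submodule.sum_mem _ fun j _ => ?_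
  have := Submodule.smul_mem _ (W i j) (hstd i j)
  rwa [smul_single, smul_eq_mul, mul_one] at this

def toSkew (d : ℕ) : ((Fin d × Fin d) → ℂ) →ₗ[ℂ] Matrix (Fin d) (Fin d) ℂ where
  toFun z := ∑ p, z p • skewB d p
  map_add' x y := by simp [add_smul, Finset.sum_add_distrib]
  map_smul' c x := by simp [smul_smul, Finset.smul_sum]

theorem toSkew_surj (d : ℕ) : LinearMap.range (toSkew d) = ⊤ := by
  rw [eq_top_iff, ← skewB_span d, Submodule.span_le]
  rintro W ⟨p, rfl⟩
  refine ⟨Pi.single p 1, ?_⟩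
  simp [toSkew, Pi.single_apply, ite_smul]

theorem toSkew_skew (d : ℕ) (z : (Fin d × Fin d) → ℂ)
    (hz : ∀ p, ∃ x : ℝ, z p = x) : (toSkew d z)ᴴ = -(toSkew d z) := by
  simp only [toSkew, LinearMap.coe_mk, AddHom.coe_mk]
  rw [conjTranspose_sum]
  rw [← Finset.sum_neg_distrib]
  refine Finset.sum_congr rfl fun p _ => ?_
  obtain ⟨x, hx⟩ := hz p
  rw [conjTranspose_smul, skewB_skew, hx]
  simp [Complex.star_def, Complex.conj_ofReal]

theorem exp_unitary_of_skew {d : ℕ} {A : Matrix (Fin d) (Fin d) ℂ} (hA : Aᴴ = -A) :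
    NormedSpace.exp A ∈ Matrix.unitaryGroup (Fin d) ℂ := by
  letI : SeminormedRing (Matrix (Fin d) (Fin d) ℂ) := Matrix.linftyOpSemiNormedRing
  letI : NormedRing (Matrix (Fin d) (Fin d) ℂ) := Matrix.linftyOpNormedRing
  letI : NormedAlgebra ℂ (Matrix (Fin d) (Fin d) ℂ) := Matrix.linftyOpNormedAlgebra
  rw [Matrix.mem_unitaryGroup_iff']
  have h1 : star (NormedSpace.exp A) = NormedSpace.exp (-A) := by
    rw [Matrix.star_eq_conjTranspose, ← Matrix.exp_conjTranspose, hA]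
  rw [h1, ← Matrix.exp_add_of_commute _ _ (Commute.neg_left (Commute.refl A)),
    neg_add_cancel, NormedSpace.exp_zero]

theorem aux_vanish {ι : Type} [Fintype ι] [DecidableEq ι]
    (f : (ι → ℂ) → ℂ) (hf : ∀ z, AnalyticAt ℂ f z)
    (S : ι → Set ℂ) (a : ι → ℂ)
    (hS : ∀ i, ∃ᶠ w in 𝓝[≠] (a i), w ∈ S i)
    (h0 : ∀ z, (∀ i, z i ∈ S i) → f z = 0) : ∀ z, f z = 0 := by
  suffices h : ∀ s : Finset ι, ∀ z : ι → ℂ, (∀ i ∉ s, z i ∈ S i) → f z = 0 by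
    intro z; exact h Finset.univ z (fun i hi => absurd (Finset.mem_univ i) hi)
  intro s
  induction s using Finset.induction_on with
  | empty => intro z hz; exact h0 z fun i => hz i (Finset.notMem_empty i)
  | @insert j s hj ih =>
    intro z hz
    set g : ℂ → ℂ := fun w => f (Function.update z j w) with hg
    have hga : ∀ w : ℂ, AnalyticAt ℂ g w := by
      intro w
      have h1 : AnalyticAt ℂ (fun w : ℂ => Function.update z j w) w := by
        have he : (fun w : ℂ => Function.update z j w)
            = fun w => Function.update z j 0 + w • Pi.single j (1:ℂ) := by
          funext w; funext i
          by_cases h : i = j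
          · subst h; simp
          · simp [Function.update_of_ne h, Pi.single_eq_of_ne h]
        rw [he]
        have h2 := (ContinuousLinearMap.toSpanSingleton ℂ ((Pi.single j (1:ℂ)) : ι → ℂ)).analyticAt w
        rw [show ⇑(ContinuousLinearMap.toSpanSingleton ℂ ((Pi.single j (1:ℂ)) : ι → ℂ)) = fun w : ℂ => w • (Pi.single j (1:ℂ) : ι → ℂ) from funext fun w => ContinuousLinearMap.toSpanSingleton_apply _ _ w] at h2
        exact analyticAt_const.add h2
      exact (hf _).comp h1
    have hgz : ∀ w ∈ S j, g w = 0 := by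
      intro w hw
      refine ih _ (fun i hi => ?_)
      by_cases h : i = j
      · subst h; simpa using hw
      · rw [Function.update_of_ne h]
        exact hz i (by simp [Finset.mem_insert, h, hi])
    have key : f (Function.update z j (z j)) = 0 := by
      have := AnalyticOnNhd.eqOn_zero_of_preconnected_of_frequently_eq_zero
        (f := g) (U := Set.univ) (fun w _ => hga w) isPreconnected_univ (Set.mem_univ (a j))
        (((hS j).mono (fun w hw => hgz w hw)))
      exact this (Set.mem_univ _)
    rwa [Function.update_eq_self] at key

theorem aux_poly_eq_zero (d : ℕ) (P : MvPolynomial (Fin d × Fin d) ℂ)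
    (h : ∀ U : Matrix (Fin d) (Fin d) ℂ, U ∈ Matrix.unitaryGroup (Fin d) ℂ →
      MvPolynomial.eval (fun p => U p.1 p.2) P = 0) : P = 0 := by
  letI : SeminormedRing (Matrix (Fin d) (Fin d) ℂ) := Matrix.linftyOpSemiNormedRing
  letI : NormedRing (Matrix (Fin d) (Fin d) ℂ) := Matrix.linftyOpNormedRing
  letI : NormedAlgebra ℂ (Matrix (Fin d) (Fin d) ℂ) := Matrix.linftyOpNormedAlgebra
  set q : Matrix (Fin d) (Fin d) ℂ → ℂ :=
    fun W => MvPolynomial.eval (fun p => W p.1 p.2) P with hqdef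
  let EntL : Matrix (Fin d) (Fin d) ℂ →ₗ[ℂ] ((Fin d × Fin d) → ℂ) :=
    { toFun := fun W p => W p.1 p.2
      map_add' := fun _ _ => rfl
      map_smul' := fun _ _ => rfl }
  let Ent := LinearMap.toContinuousLinearMap EntL
  have hqan : ∀ W, AnalyticAt ℂ q W := fun W =>
    (aux_poly_analytic P _).comp (Ent.analyticAt W)
  have hexp0 : ∀ A : Matrix (Fin d) (Fin d) ℂ, q (NormedSpace.exp A) = 0 := by
    have hz : ∀ z : (Fin d × Fin d) → ℂ, q (NormedSpace.exp (toSkew d z)) = 0 := by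
      refine aux_vanish _ ?_ (fun _ => Set.range (Complex.ofReal)) (fun _ => 0) ?_ ?_
      · intro z
        exact (hqan _).comp ((NormedSpace.exp_analytic _).comp
          ((LinearMap.toContinuousLinearMap (toSkew d)).analyticAt z))
      · intro i
        have h1 : Filter.Tendsto (fun x : ℝ => (x : ℂ)) (𝓝[≠] (0:ℝ)) (𝓝[≠] (0:ℂ)) := by
          apply Filter.Tendsto.inf
          · simpa using (Complex.continuous_ofReal.tendsto 0)
          · exact Filter.tendsto_principal_principal.2 fun x hx => by
              simpa [Complex.ofReal_eq_zero] using hx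
        exact h1.frequently (Filter.Eventually.frequently
          (Filter.Eventually.of_forall fun x => ⟨x, rfl⟩))
      · intro z hzr
        have hskew : (toSkew d z)ᴴ = -(toSkew d z) := by
          apply toSkew_skew
          intro p
          obtain ⟨x, hx⟩ := hzr p
          exact ⟨x, hx.symm⟩
        exact h _ (exp_unitary_of_skew hskew)
    intro A
    have : A ∈ LinearMap.range (toSkew d) := by rw [toSkew_surj]; trivial
    obtain ⟨z, rfl⟩ := this
    exact hz z
  have hnhds : Filter.map (NormedSpace.exp) (𝓝 (0 : Matrix (Fin d) (Fin d) ℂ))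
      = 𝓝 (1 : Matrix (Fin d) (Fin d) ℂ) := by
    have h1 := hasStrictFDerivAt_exp_zero (𝕂 := ℂ) (𝔸 := Matrix (Fin d) (Fin d) ℂ)
    have h2 : HasStrictFDerivAt (NormedSpace.exp)
        ((ContinuousLinearEquiv.refl ℂ (Matrix (Fin d) (Fin d) ℂ)
          : Matrix (Fin d) (Fin d) ℂ ≃L[ℂ] Matrix (Fin d) (Fin d) ℂ)
          : Matrix (Fin d) (Fin d) ℂ →L[ℂ] Matrix (Fin d) (Fin d) ℂ) 0 := by
      exact h1
    have := h2.map_nhds_eq_of_equiv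
    rwa [NormedSpace.exp_zero] at this
  have hN : {W : Matrix (Fin d) (Fin d) ℂ | q W = 0} ∈ 𝓝 (1 : Matrix (Fin d) (Fin d) ℂ) := by
    rw [← hnhds, Filter.mem_map]
    exact Filter.mem_of_superset Filter.univ_mem fun A _ => hexp0 A
  have hq0 : ∀ W, q W = 0 := by
    let zee : ((Fin d × Fin d) → ℂ) →ₗ[ℂ] Matrix (Fin d) (Fin d) ℂ :=
      { toFun := fun z => Matrix.of fun a b => z (a, b)
        map_add' := fun _ _ => rfl
        map_smul' := fun _ _ => rfl }
    let zeeC := LinearMap.toContinuousLinearMap zee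
    set c : (Fin d × Fin d) → ℂ := fun p => (1 : Matrix (Fin d) (Fin d) ℂ) p.1 p.2 with hc
    have hzc : zeeC c = 1 := by
      ext a b
      rfl
    have hV : zeeC ⁻¹' {W | q W = 0} ∈ 𝓝 c := by
      have hcont := zeeC.continuous.continuousAt (x := c)
      rw [ContinuousAt, hzc] at hcont
      exact hcont hN
    obtain ⟨ε, hε, hball⟩ := Metric.mem_nhds_iff.1 hV
    have hvan : ∀ z, q (zeeC z) = 0 := by
      refine aux_vanish _ (fun z => (hqan _).comp (zeeC.analyticAt z))
        (fun p => Metric.ball (c p) (ε/2)) c ?_ ?_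
      · intro p
        apply Filter.Eventually.frequently
        apply Filter.Eventually.filter_mono nhdsWithin_le_nhds
        exact Filter.eventually_iff.2 (Metric.ball_mem_nhds _ (by positivity))
      · intro z hb
        apply hball
        rw [Metric.mem_ball]
        calc dist z c < ε/2 := (dist_pi_lt_iff (by positivity)).2 fun p => hb p
        _ < ε := half_lt_self hε
    intro W
    have h2 := hvan (fun p => W p.1 p.2)
    have hWz : zeeC (fun p => W p.1 p.2) = W := by ext a b; rfl
    rwa [hWz] at h2
  apply MvPolynomial.funext
  intro x
  have := hq0 (Matrix.of fun a b => x (a, b))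
  simpa [hqdef] using this

def evalOnU (d : ℕ) : MvPolynomial (Fin d × Fin d) ℂ →ₗ[ℂ] (UG d → ℂ) where
  toFun P := fun U => MvPolynomial.eval (fun p => (U : Matrix (Fin d) (Fin d) ℂ) p.1 p.2) P
  map_add' P Q := by funext U; simp
  map_smul' c P := by funext U; simp [MvPolynomial.smul_eval]

theorem evalOnU_inj (d : ℕ) : Function.Injective (evalOnU d) := by
  intro P Q hPQ
  have h0 : evalOnU d (P - Q) = 0 := by rw [map_sub, hPQ, sub_self]
  have hz : P - Q = 0 :=
    aux_poly_eq_zero d _ (fun U hU => congrFun h0 (⟨U, hU⟩ : UG d))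
  exact sub_eq_zero.1 hz

theorem monomial_prod_form {d r : ℕ} (s : (Fin d × Fin d) →₀ ℕ) (hs : s.degree = r) :
    ∃ i j : Fin r → Fin d, ∀ x : (Fin d × Fin d) → ℂ,
      MvPolynomial.eval x (MvPolynomial.monomial s 1) = ∏ k, x (i k, j k) := by
  classical
  set l := s.toMultiset.toList with hl
  have hlen : l.length = r := by
    rw [hl, Multiset.length_toList, Finsupp.card_toMultiset, ← hs]
    rfl
  refine ⟨fun k => (l.get (Fin.cast hlen.symm k)).1,
    fun k => (l.get (Fin.cast hlen.symm k)).2, fun x => ?_⟩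
  rw [MvPolynomial.eval_monomial, one_mul]
  have h1 : ∏ k : Fin r, x (l.get (Fin.cast hlen.symm k)) = ∏ k : Fin l.length, x (l.get k) :=
    Fintype.prod_equiv (finCongr hlen.symm) _ _ (fun k => rfl)
  have h2 : ∏ k : Fin l.length, x (l.get k) = (l.map x).prod := by
    calc (∏ k : Fin l.length, x (l.get k)) = (List.ofFn (x ∘ l.get)).prod := by
          rw [List.prod_ofFn]; rfl
      _ = ((List.ofFn l.get).map x).prod := by rw [List.map_ofFn]
      _ = (l.map x).prod := by rw [List.ofFn_get]
  have h3 : (l.map x).prod = ((s.toMultiset.map x)).prod := by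
    rw [← Multiset.prod_coe]
    congr 1
    rw [← Multiset.map_coe, hl, Multiset.coe_toList]
  have h4 : ((s.toMultiset.map x)).prod = s.prod fun p e => x p ^ e := by
    rw [Finsupp.toMultiset_map, Finsupp.prod_toMultiset]
    exact Finsupp.prod_mapDomain_index (fun b => pow_zero b)
      (fun b m₁ m₂ => pow_add b m₁ m₂)
  have hfin : ∀ k : Fin r, x (((l.get (Fin.cast hlen.symm k)).1, (l.get (Fin.cast hlen.symm k)).2))
      = x (l.get (Fin.cast hlen.symm k)) := fun k => rfl
  calc s.prod (fun p e => x p ^ e) = ∏ k : Fin r, x (l.get (Fin.cast hlen.symm k)) := by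
        rw [h1, h2, h3, h4]
    _ = _ := by exact Finset.prod_congr rfl fun k _ => (hfin k).symm

theorem homSpace_eq (d r : ℕ) :
    homSpace d r 0 = Submodule.map (evalOnU d)
      (MvPolynomial.homogeneousSubmodule (Fin d × Fin d) ℂ r) := by
  classical
  apply le_antisymm
  · rw [homSpace, Submodule.span_le]
    rintro f ⟨i, j, p, q, rfl⟩
    refine ⟨∏ k : Fin r, MvPolynomial.X (i k, j k), ?_, ?_⟩
    · rw [SetLike.mem_coe, MvPolynomial.mem_homogeneousSubmodule]
      have := MvPolynomial.IsHomogeneous.prod Finset.univ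
        (fun k : Fin r => MvPolynomial.X ((i k, j k) : Fin d × Fin d)) (fun _ => 1)
        (fun k _ => MvPolynomial.isHomogeneous_X ℂ _)
      simpa using this
    · funext U
      simp only [evalOnU, LinearMap.coe_mk, AddHom.coe_mk, _root_.map_prod,
        MvPolynomial.eval_X]
      simp
  · rw [MvPolynomial.homogeneousSubmodule_eq_finsupp_supported,
      AddMonoidAlgebra.supported_eq_span_single, Submodule.map_span, Submodule.span_le]
    rintro f ⟨g, ⟨s, hs, rfl⟩, rfl⟩
    obtain ⟨i, j, hij⟩ := monomial_prod_form s hs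
    apply Submodule.subset_span
    refine ⟨i, j, Fin.elim0, Fin.elim0, ?_⟩
    funext U
    have : AddMonoidAlgebra.single s (1:ℂ) = MvPolynomial.monomial s 1 :=
      MvPolynomial.single_eq_monomial s 1
    simp only [evalOnU, LinearMap.coe_mk, AddHom.coe_mk, this, hij]
    simp

theorem stmt_6 (d r : ℕ) (hd : 1 ≤ d) :
    Module.finrank ℂ (homSpace d r 0) = (d ^ 2 + r - 1).choose r := by
  classical
  have hds : ∀ f : (Fin d × Fin d) →₀ ℕ, f.toMultiset.card = f.degree := fun f => by
    rw [Finsupp.card_toMultiset]; rfl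
  rw [homSpace_eq d r]
  have e1 := Submodule.equivMapOfInjective (evalOnU d) (evalOnU_inj d)
    (MvPolynomial.homogeneousSubmodule (Fin d × Fin d) ℂ r)
  rw [← e1.finrank_eq]
  have esym : ↥{s : (Fin d × Fin d) →₀ ℕ | s.degree = r} ≃ Sym (Fin d × Fin d) r :=
    { toFun := fun x => ⟨Finsupp.toMultiset x.1, by rw [hds]; exact x.2⟩
      invFun := fun m => ⟨Multiset.toFinsupp m.1, by
        have h2 := m.2
        show (Multiset.toFinsupp m.1).degree = r
        rw [← hds, Multiset.toFinsupp_toMultiset]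
        exact h2⟩
      left_inv := fun x => Subtype.ext (Finsupp.toMultiset_toFinsupp x.1)
      right_inv := fun m => Subtype.ext (Multiset.toFinsupp_toMultiset m.1) }
  letI : Fintype ↥{s : (Fin d × Fin d) →₀ ℕ | s.degree = r} := Fintype.ofEquiv _ esym.symm
  have hli : LinearIndependent ℂ
      (fun t : ↥{t : (Fin d × Fin d) →₀ ℕ | t.degree = r} =>
        (MvPolynomial.monomial t.1 1 : MvPolynomial (Fin d × Fin d) ℂ)) := by
    have h := (MvPolynomial.basisMonomials (Fin d × Fin d) ℂ).linearIndependent.comp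
      (Subtype.val : ↥{t : (Fin d × Fin d) →₀ ℕ | t.degree = r} → _) Subtype.val_injective
    rwa [MvPolynomial.coe_basisMonomials] at h
  have hsp : MvPolynomial.homogeneousSubmodule (Fin d × Fin d) ℂ r
      = Submodule.span ℂ (Set.range
        (fun t : ↥{t : (Fin d × Fin d) →₀ ℕ | t.degree = r} =>
          (MvPolynomial.monomial t.1 1 : MvPolynomial (Fin d × Fin d) ℂ))) := by
    rw [MvPolynomial.homogeneousSubmodule_eq_finsupp_supported,
      AddMonoidAlgebra.supported_eq_span_single]
    congr 1
    rw [Set.image_eq_range]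
    rfl
  rw [hsp, finrank_span_eq_card hli]
  rw [Fintype.card_congr esym, Sym.card_sym_eq_choose]
  norm_num [Fintype.card_prod, Fintype.card_fin, pow_two]
end
end

section
/- If X is a unitary t-design in U(d) (t ≥ 1), then |X| ≥ dimHom(d, ⌈t/2⌉, ⌊t/2⌋), the complex dimension of the space Hom(⌈t/2⌉, ⌊t/2⌋) of functions on U(d). -/
open MeasureTheory

noncomputable section

/-! ### Auxiliary lemmas -/

lemma ug_compact (d : ℕ) : CompactSpace (UG d) := by
  have hsub : (Matrix.unitaryGroup (Fin d) ℂ : Set (Matrix (Fin d) (Fin d) ℂ)) ⊆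
      Set.pi Set.univ (fun _ : Fin d => Set.pi Set.univ
        (fun _ : Fin d => Metric.closedBall (0 : ℂ) 1)) := by
    intro A hA
    intro i _ j _
    simpa [Metric.mem_closedBall, dist_eq_norm] using entry_norm_bound_of_unitary hA i j
  have hcomp : IsCompact (Set.pi Set.univ (fun _ : Fin d => Set.pi Set.univ
      (fun _ : Fin d => Metric.closedBall (0 : ℂ) 1))) :=
    isCompact_univ_pi fun _ => isCompact_univ_pi fun _ => isCompact_closedBall _ _
  have hclosed : IsClosed (Matrix.unitaryGroup (Fin d) ℂ : Set (Matrix (Fin d) (Fin d) ℂ)) := by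
    have hset : (Matrix.unitaryGroup (Fin d) ℂ : Set (Matrix (Fin d) (Fin d) ℂ)) =
        {A | star A * A = 1} ∩ {A | A * star A = 1} := by
      ext A
      simp only [Set.mem_inter_iff, Set.mem_setOf_eq, SetLike.mem_coe]
      exact Unitary.mem_iff
    rw [hset]
    have hc1 : Continuous (fun A : Matrix (Fin d) (Fin d) ℂ => star A * A) :=
      Continuous.matrix_mul (continuous_id.matrix_conjTranspose) continuous_id
    have hc2 : Continuous (fun A : Matrix (Fin d) (Fin d) ℂ => A * star A) :=
      Continuous.matrix_mul continuous_id (continuous_id.matrix_conjTranspose)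
    exact (isClosed_singleton.preimage hc1).inter (isClosed_singleton.preimage hc2)
  exact isCompact_iff_compactSpace.mp (hcomp.of_isClosed_subset hclosed hsub)

instance (d : ℕ) : CompactSpace (UG d) := ug_compact d

lemma entry_continuous (d : ℕ) (i j : Fin d) :
    Continuous (fun U : UG d => (U : Matrix (Fin d) (Fin d) ℂ) i j) :=
  (continuous_apply j).comp ((continuous_apply i).comp continuous_subtype_val)

lemma homSpace_continuous {d r s : ℕ} {f : UG d → ℂ} (hf : f ∈ homSpace d r s) :
    Continuous f := by
  induction hf using Submodule.span_induction with
  | mem f hf =>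
    obtain ⟨i, j, p, q, rfl⟩ := hf
    exact Continuous.mul (continuous_finset_prod _ fun k _ => entry_continuous d (i k) (j k))
      (continuous_finset_prod _ fun k _ =>
        Complex.continuous_conj.comp (entry_continuous d (p k) (q k)))
  | zero => exact continuous_const
  | add f g _ _ hf hg => exact hf.add hg
  | smul c f _ hf => exact continuous_const.mul hf

lemma homSpace_conj {d r s : ℕ} {f : UG d → ℂ} (hf : f ∈ homSpace d r s) :
    (fun U => (starRingEnd ℂ) (f U)) ∈ homSpace d s r := by
  induction hf using Submodule.span_induction with
  | mem f hf =>
    obtain ⟨i, j, p, q, rfl⟩ := hf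
    apply Submodule.subset_span
    refine ⟨p, q, i, j, ?_⟩
    funext U
    simp only [map_mul, map_prod, Complex.conj_conj]
    ring
  | zero =>
    convert (homSpace d s r).zero_mem using 1; funext U; simp
  | add f g _ _ hf hg =>
    convert (homSpace d s r).add_mem hf hg using 1; funext U; simp
  | smul c f _ hf =>
    have := Submodule.smul_mem _ ((starRingEnd ℂ) c) hf
    simpa [map_mul, Pi.smul_def, smul_eq_mul] using this

lemma homSpace_mul {d r s r' s' : ℕ} {f g : UG d → ℂ}
    (hf : f ∈ homSpace d r s) (hg : g ∈ homSpace d r' s') :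
    (fun U => f U * g U) ∈ homSpace d (r + r') (s + s') := by
  induction hf using Submodule.span_induction with
  | mem f hf =>
    induction hg using Submodule.span_induction with
    | mem g hg =>
      obtain ⟨i, j, p, q, rfl⟩ := hf
      obtain ⟨i', j', p', q', rfl⟩ := hg
      apply Submodule.subset_span
      refine ⟨Fin.append i i', Fin.append j j', Fin.append p p', Fin.append q q', ?_⟩
      funext U
      simp only [Fin.prod_univ_add, Fin.append_left, Fin.append_right]
      ring
    | zero =>
      convert (homSpace d (r + r') (s + s')).zero_mem using 1; funext U; simp
    | add g₁ g₂ _ _ h1 h2 =>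
      convert (homSpace d (r + r') (s + s')).add_mem h1 h2 using 1; funext U
      simp [mul_add]
    | smul c g _ h =>
      convert (homSpace d (r + r') (s + s')).smul_mem c h using 1; funext U
      simp [Pi.smul_def, smul_eq_mul]; ring
  | zero =>
    convert (homSpace d (r + r') (s + s')).zero_mem using 1; funext U; simp
  | add f₁ f₂ _ _ h1 h2 =>
    convert (homSpace d (r + r') (s + s')).add_mem h1 h2 using 1; funext U
    simp [add_mul]
  | smul c f _ h =>
    convert (homSpace d (r + r') (s + s')).smul_mem c h using 1; funext U
    simp [Pi.smul_def, smul_eq_mul]; ring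

theorem stmt_7 (d t : ℕ) (ht : 1 ≤ t)
    (μ : Measure (UG d)) [μ.IsHaarMeasure] [IsProbabilityMeasure μ]
    (X : Finset (UG d)) (hX : IsUnitaryDesign d t μ X) :
    Module.finrank ℂ (homSpace d ((t + 1) / 2) (t / 2)) ≤ X.card := by
  set r := (t + 1) / 2
  set s := t / 2
  have hrs : r + s = t := by omega
  have hsr : s + r = t := by omega
  -- key: any element of Hom(r,s) vanishing on X is zero
  have key : ∀ f : UG d → ℂ, f ∈ homSpace d r s → (∀ U ∈ X, f U = 0) → f = 0 := by
    intro f hf hf0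
    set g : UG d → ℂ := fun U => f U * (starRingEnd ℂ) (f U) with hg_def
    have hg : g ∈ homSpace d t t := by
      have := homSpace_mul hf (homSpace_conj hf)
      rwa [hrs, hsr] at this
    have hdes := hX.2 g hg
    have hsum : ∑ U ∈ X, g U = 0 :=
      Finset.sum_eq_zero fun U hU => by simp [hg_def, hf0 U hU]
    have hint : ∫ U, g U ∂μ = 0 := by rw [← hdes, hsum, mul_zero]
    have hgre : ∀ U, g U = ((Complex.normSq (f U) : ℝ) : ℂ) := fun U => by
      simp [hg_def, Complex.mul_conj]
    have hcont : Continuous f := homSpace_continuous hf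
    have hcont2 : Continuous fun U : UG d => Complex.normSq (f U) :=
      Complex.continuous_normSq.comp hcont
    have hinteg : Integrable (fun U : UG d => Complex.normSq (f U)) μ :=
      hcont2.integrable_of_hasCompactSupport
        (IsCompact.of_isClosed_subset isCompact_univ (isClosed_tsupport _) (Set.subset_univ _))
    have hre : ∫ U, Complex.normSq (f U) ∂μ = 0 := by
      have : ∫ U, g U ∂μ = ((∫ U, Complex.normSq (f U) ∂μ : ℝ) : ℂ) := by
        simp_rw [hgre]; exact integral_ofReal
      rw [this] at hint
      exact_mod_cast hint
    have hae : (fun U : UG d => Complex.normSq (f U)) =ᵐ[μ] 0 :=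
      (integral_eq_zero_iff_of_nonneg (fun U => Complex.normSq_nonneg _) hinteg).mp hre
    have heq : (fun U : UG d => Complex.normSq (f U)) = 0 :=
      (Continuous.ae_eq_iff_eq μ hcont2 continuous_const).mp hae
    funext U
    have : Complex.normSq (f U) = 0 := congrFun heq U
    exact Complex.normSq_eq_zero.mp this
  -- evaluation map into functions on X
  let L : (homSpace d r s) →ₗ[ℂ] ({U : UG d // U ∈ X} → ℂ) :=
    { toFun := fun v x => (v : UG d → ℂ) x
      map_add' := fun v w => rfl
      map_smul' := fun c v => rfl }
  have hL : Function.Injective L := by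
    rw [← LinearMap.ker_eq_bot, LinearMap.ker_eq_bot']
    intro v hv
    apply Subtype.ext
    apply key _ v.2
    intro U hU
    exact congrFun hv ⟨U, hU⟩
  have := LinearMap.finrank_le_finrank_of_injective hL
  simpa [Module.finrank_pi, Fintype.card_coe] using this
end
end

section
/- Let ρ : U(d) → U(n) be a continuous group homomorphism whose induced action on ℂⁿ is irreducible, and let M_ρ ⊆ (U(d) → ℂ) be the complex span of the matrix coefficient functions M ↦ ρ(M)_{ij} for i,j ∈ {1,…,n}. Define, for U ∈ U(d), the zonal function Z_U : U(d) → ℂ by Z_U(M) = n · tr(ρ(U)* ρ(M)). Then for every p ∈ M_ρ and every U ∈ U(d), ∫_{U(d)} conj(Z_U(M)) · p(M) dM = p(U), where the integral is with respect to the Haar probability measure on U(d). -/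
open MeasureTheory

noncomputable section

open Matrix

namespace Stmt10Aux

lemma ug_compact (d : ℕ) : CompactSpace (UG d) := by
  suffices h : IsCompact ((Matrix.unitaryGroup (Fin d) ℂ : Set (Matrix (Fin d) (Fin d) ℂ))) from
    isCompact_iff_compactSpace.mp h
  have hclosed : IsClosed ((Matrix.unitaryGroup (Fin d) ℂ : Set (Matrix (Fin d) (Fin d) ℂ))) := by
    have h : (Matrix.unitaryGroup (Fin d) ℂ : Set (Matrix (Fin d) (Fin d) ℂ)) =
        (fun A : Matrix (Fin d) (Fin d) ℂ => A * star A) ⁻¹' {1} := by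
      ext A
      simp [Matrix.mem_unitaryGroup_iff]
    rw [h]
    exact isClosed_singleton.preimage (by
      have : Continuous fun A : Matrix (Fin d) (Fin d) ℂ => A * Aᴴ :=
        continuous_id.matrix_mul continuous_id.matrix_conjTranspose
      simpa [Matrix.star_eq_conjTranspose] using this)
  have hsub : (Matrix.unitaryGroup (Fin d) ℂ : Set (Matrix (Fin d) (Fin d) ℂ)) ⊆
      Set.pi Set.univ (fun _ : Fin d => Set.pi Set.univ
        (fun _ : Fin d => Metric.closedBall (0:ℂ) 1)) := by
    intro A hA
    have h1 : A * star A = 1 := Matrix.mem_unitaryGroup_iff.mp hA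
    intro i _ j _
    simp only [Metric.mem_closedBall, dist_zero_right]
    have h2 : ∑ k, Complex.normSq (A i k) = 1 := by
      have h3 := congrArg (fun B => B i i) h1
      simp only [Matrix.mul_apply, Matrix.star_apply, Matrix.one_apply_eq] at h3
      have h4 : ∑ k, A i k * star (A i k) = 1 := h3
      have h5 : ((∑ k, Complex.normSq (A i k) : ℝ) : ℂ) = ((1:ℝ) : ℂ) := by
        push_cast
        rw [← h4]
        refine Finset.sum_congr rfl fun k _ => ?_
        rw [Complex.star_def, Complex.mul_conj]
      exact_mod_cast h5
    have h6 : Complex.normSq (A i j) ≤ 1 := by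
      rw [← h2]
      exact Finset.single_le_sum (fun k _ => Complex.normSq_nonneg _) (Finset.mem_univ j)
    have h7 : ‖A i j‖ ^ 2 ≤ 1 := by rw [← Complex.sq_norm] at h6; exact h6
    nlinarith [norm_nonneg (A i j)]
  have hK : IsCompact (Set.pi Set.univ (fun _ : Fin d => Set.pi Set.univ
      (fun _ : Fin d => Metric.closedBall (0:ℂ) 1))) :=
    isCompact_univ_pi fun _ => isCompact_univ_pi fun _ => isCompact_closedBall _ _
  exact hK.of_isClosed_subset hclosed hsub

lemma cont_integrable {d : ℕ} (μ : Measure (UG d)) [IsProbabilityMeasure μ] {f : UG d → ℂ}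
    (hf : Continuous f) : Integrable f μ := by
  haveI := ug_compact d
  exact hf.integrable_of_hasCompactSupport
    (IsCompact.of_isClosed_subset isCompact_univ (isClosed_tsupport f) (Set.subset_univ _))

lemma entry_cont {d n : ℕ} (ρ : UG d →* Matrix.unitaryGroup (Fin n) ℂ) (hcont : Continuous ρ)
    (i j : Fin n) : Continuous fun M : UG d => (ρ M : Matrix (Fin n) (Fin n) ℂ) i j :=
  (continuous_apply j).comp ((continuous_apply i).comp hcont.subtype_val)

lemma sandwich_entry {n : ℕ} (A : Matrix (Fin n) (Fin n) ℂ) (a l i j : Fin n) :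
    (A * Matrix.single a l (1:ℂ) * star A) i j = A i a * (starRingEnd ℂ) (A j l) := by
  simp [Matrix.mul_apply, Matrix.single, Matrix.star_apply, Matrix.of_apply,
    mul_ite, ite_mul, Finset.sum_ite_eq, Finset.sum_ite_eq', Complex.star_def, ite_and]

lemma trace_std {n : ℕ} (a l : Fin n) :
    (Matrix.single a l (1:ℂ)).trace = if a = l then 1 else 0 := by
  by_cases h : a = l
  · subst h; simp [Matrix.trace_single_eq_same]
  · simp [Matrix.trace, Matrix.diag, Matrix.single, Matrix.of_apply, h]
    exact fun e => h e.symm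

lemma schur_orth {d n : ℕ} (hn : 0 < n)
    (μ : Measure (UG d)) [μ.IsHaarMeasure] [IsProbabilityMeasure μ]
    (ρ : UG d →* Matrix.unitaryGroup (Fin n) ℂ) (hcont : Continuous ρ)
    (hirr : ∀ W : Submodule ℂ (Fin n → ℂ),
      (∀ U : UG d, ∀ v ∈ W, Matrix.mulVec (ρ U : Matrix (Fin n) (Fin n) ℂ) v ∈ W) →
        W = ⊥ ∨ W = ⊤)
    (i a j l : Fin n) :
    ∫ M, (ρ M : Matrix (Fin n) (Fin n) ℂ) i a *
        (starRingEnd ℂ) ((ρ M : Matrix (Fin n) (Fin n) ℂ) j l) ∂μ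
      = (if i = j then 1 else 0) * (if a = l then 1 else 0) / n := by
  set E : Matrix (Fin n) (Fin n) ℂ := Matrix.single a l 1 with hE
  set g : UG d → Matrix (Fin n) (Fin n) ℂ :=
    fun M => (ρ M : Matrix (Fin n) (Fin n) ℂ) * E * star (ρ M : Matrix (Fin n) (Fin n) ℂ) with hg
  have hgE : ∀ (M : UG d) (i' j' : Fin n), g M i' j' =
      (ρ M : Matrix (Fin n) (Fin n) ℂ) i' a *
        (starRingEnd ℂ) ((ρ M : Matrix (Fin n) (Fin n) ℂ) j' l) := by
    intro M i' j'
    exact sandwich_entry _ a l i' j'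
  have hgc : ∀ i' j' : Fin n, Continuous fun M => g M i' j' := by
    intro i' j'
    rw [show (fun M => g M i' j') = fun M => (ρ M : Matrix (Fin n) (Fin n) ℂ) i' a *
        (starRingEnd ℂ) ((ρ M : Matrix (Fin n) (Fin n) ℂ) j' l) from funext fun M => hgE M i' j']
    exact (entry_cont ρ hcont i' a).mul (Complex.continuous_conj.comp (entry_cont ρ hcont j' l))
  have hgi : ∀ i' j' : Fin n, Integrable (fun M => g M i' j') μ :=
    fun i' j' => cont_integrable μ (hgc i' j')
  set T : Matrix (Fin n) (Fin n) ℂ := Matrix.of (fun i' j' => ∫ M, g M i' j' ∂μ) with hT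
  have hg_mul : ∀ V M : UG d, g (V * M) =
      (ρ V : Matrix (Fin n) (Fin n) ℂ) * g M * star (ρ V : Matrix (Fin n) (Fin n) ℂ) := by
    intro V M
    have hRmul : (ρ (V * M) : Matrix (Fin n) (Fin n) ℂ) =
        (ρ V : Matrix (Fin n) (Fin n) ℂ) * (ρ M : Matrix (Fin n) (Fin n) ℂ) := by
      rw [_root_.map_mul]; rfl
    simp only [hg, hRmul, Matrix.star_mul, mul_assoc]
  have key : ∀ V : UG d,
      (ρ V : Matrix (Fin n) (Fin n) ℂ) * T * star (ρ V : Matrix (Fin n) (Fin n) ℂ) = T := by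
    intro V
    set A : Matrix (Fin n) (Fin n) ℂ := (ρ V : Matrix (Fin n) (Fin n) ℂ) with hA
    ext i' j'
    have hTe : ∀ k m : Fin n, T k m = ∫ M, g M k m ∂μ := fun k m => rfl
    have expand2 : ∀ B : Matrix (Fin n) (Fin n) ℂ,
        (A * B * star A) i' j' = ∑ m, ∑ k, A i' k * B k m * star A m j' := by
      intro B; simp [Matrix.mul_apply, Finset.sum_mul]
    calc (A * T * star A) i' j' = ∑ m, ∑ k, A i' k * T k m * star A m j' := expand2 T
      _ = ∑ m, ∑ k, ∫ M, A i' k * g M k m * star A m j' ∂μ := by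
          refine Finset.sum_congr rfl fun m _ => Finset.sum_congr rfl fun k _ => ?_
          rw [hTe, ← MeasureTheory.integral_const_mul, ← MeasureTheory.integral_mul_const]
      _ = ∑ m, ∫ M, ∑ k, A i' k * g M k m * star A m j' ∂μ := by
          refine Finset.sum_congr rfl fun m _ => ?_
          rw [← MeasureTheory.integral_finset_sum _
            (fun k _ => ((hgi k m).const_mul _).mul_const _)]
      _ = ∫ M, ∑ m, ∑ k, A i' k * g M k m * star A m j' ∂μ := by
          rw [← MeasureTheory.integral_finset_sum _
            (fun m _ => integrable_finset_sum _ (fun k _ => ((hgi k m).const_mul _).mul_const _))]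
      _ = ∫ M, (A * g M * star A) i' j' ∂μ := by
          congr 1; funext M; exact (expand2 (g M)).symm
      _ = ∫ M, g (V * M) i' j' ∂μ := by
          congr 1; funext M; rw [hg_mul V M, ← hA]
      _ = ∫ M, g M i' j' ∂μ := MeasureTheory.integral_mul_left_eq_self (fun M => g M i' j') V
      _ = T i' j' := rfl
  have comm : ∀ V : UG d, (ρ V : Matrix (Fin n) (Fin n) ℂ) * T
      = T * (ρ V : Matrix (Fin n) (Fin n) ℂ) := by
    intro V
    conv_rhs => rw [← key V]
    rw [mul_assoc ((ρ V : Matrix (Fin n) (Fin n) ℂ) * T),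
      Matrix.UnitaryGroup.star_mul_self (ρ V), mul_one]
  haveI : Nonempty (Fin n) := ⟨⟨0, hn⟩⟩
  obtain ⟨c, hc⟩ := Module.End.exists_eigenvalue (Matrix.mulVecLin T)
  have hWinv : ∀ V : UG d, ∀ v ∈ Module.End.eigenspace (Matrix.mulVecLin T) c,
      Matrix.mulVec (ρ V : Matrix (Fin n) (Fin n) ℂ) v ∈
        Module.End.eigenspace (Matrix.mulVecLin T) c := by
    intro V v hv
    rw [Module.End.mem_eigenspace_iff] at hv ⊢
    rw [Matrix.mulVecLin_apply] at hv ⊢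
    rw [Matrix.mulVec_mulVec, ← comm V, ← Matrix.mulVec_mulVec, hv, Matrix.mulVec_smul]
  rcases hirr _ hWinv with hbot | htop
  · exact absurd hbot hc
  have hTc : T = c • (1 : Matrix (Fin n) (Fin n) ℂ) := by
    ext i' j'
    have hmem : Pi.single j' (1:ℂ) ∈ Module.End.eigenspace (Matrix.mulVecLin T) c := by
      rw [htop]; trivial
    rw [Module.End.mem_eigenspace_iff, Matrix.mulVecLin_apply] at hmem
    have h2 := congrFun hmem i'
    simpa [Matrix.mulVec_single, Pi.single_apply, Matrix.one_apply, mul_ite,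
      Matrix.smul_apply, smul_eq_mul, eq_comm] using h2
  have htrg : ∀ M : UG d, (g M).trace = E.trace := by
    intro M
    calc ((ρ M : Matrix (Fin n) (Fin n) ℂ) * E * star (ρ M : Matrix (Fin n) (Fin n) ℂ)).trace
        = (star (ρ M : Matrix (Fin n) (Fin n) ℂ) * (ρ M : Matrix (Fin n) (Fin n) ℂ) * E).trace :=
          Matrix.trace_mul_cycle _ _ _
      _ = E.trace := by rw [Matrix.UnitaryGroup.star_mul_self (ρ M), one_mul]
  have htrT : T.trace = E.trace := by
    calc T.trace = ∑ i', ∫ M, g M i' i' ∂μ := rfl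
      _ = ∫ M, ∑ i', g M i' i' ∂μ := (integral_finset_sum _ (fun i' _ => hgi i' i')).symm
      _ = ∫ M, (g M).trace ∂μ := rfl
      _ = ∫ M, E.trace ∂μ := by simp_rw [htrg]
      _ = E.trace := by simp
  have hcval : c * n = E.trace := by
    have : T.trace = c * n := by
      rw [hTc, Matrix.trace_smul, Matrix.trace_one, smul_eq_mul]
      simp
    rw [← this, htrT]
  have hn' : (n : ℂ) ≠ 0 := Nat.cast_ne_zero.mpr hn.ne'
  calc ∫ M, (ρ M : Matrix (Fin n) (Fin n) ℂ) i a *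
        (starRingEnd ℂ) ((ρ M : Matrix (Fin n) (Fin n) ℂ) j l) ∂μ
      = ∫ M, g M i j ∂μ := by congr 1; funext M; exact (hgE M i j).symm
    _ = T i j := rfl
    _ = c * (if i = j then 1 else 0) := by rw [hTc]; simp [Matrix.smul_apply, Matrix.one_apply]
    _ = (if i = j then 1 else 0) * (if a = l then 1 else 0) / n := by
        have : c = (if a = l then (1:ℂ) else 0) / n := by
          rw [eq_div_iff hn', hcval, hE, trace_std]
        rw [this]
        ring

end Stmt10Aux

open Stmt10Aux in
theorem stmt_10 (d n : ℕ)
    (μ : Measure (UG d)) [μ.IsHaarMeasure] [IsProbabilityMeasure μ]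
    (ρ : UG d →* Matrix.unitaryGroup (Fin n) ℂ)
    (hcont : Continuous ρ)
    (hirr : ∀ W : Submodule ℂ (Fin n → ℂ),
      (∀ U : UG d, ∀ v ∈ W, Matrix.mulVec (ρ U : Matrix (Fin n) (Fin n) ℂ) v ∈ W) →
        W = ⊥ ∨ W = ⊤)
    (p : UG d → ℂ)
    (hp : p ∈ Submodule.span ℂ
      {f : UG d → ℂ | ∃ i j : Fin n,
        f = fun M : UG d => (ρ M : Matrix (Fin n) (Fin n) ℂ) i j})
    (U : UG d) :
    ∫ M, (starRingEnd ℂ)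
          ((n : ℂ) * Matrix.trace (star (ρ U : Matrix (Fin n) (Fin n) ℂ) *
            (ρ M : Matrix (Fin n) (Fin n) ℂ))) * p M ∂μ = p U := by
  set Z : UG d → ℂ := fun M => (starRingEnd ℂ)
    ((n : ℂ) * Matrix.trace (star (ρ U : Matrix (Fin n) (Fin n) ℂ) *
      (ρ M : Matrix (Fin n) (Fin n) ℂ))) with hZ
  show ∫ M, Z M * p M ∂μ = p U
  rcases Nat.eq_zero_or_pos n with hn | hn
  · subst hn
    have hempty : {f : UG d → ℂ | ∃ i j : Fin 0,
        f = fun M : UG d => (ρ M : Matrix (Fin 0) (Fin 0) ℂ) i j} = ∅ :=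
      Set.eq_empty_iff_forall_notMem.mpr (fun f ⟨i, _, _⟩ => i.elim0)
    rw [hempty, Submodule.span_empty, Submodule.mem_bot] at hp
    rw [hp]
    simp
  · have hZc : Continuous Z := by
      rw [hZ]
      apply Complex.continuous_conj.comp
      exact continuous_const.mul (Continuous.matrix_trace
        (Continuous.matrix_mul continuous_const (continuous_subtype_val.comp hcont)))
    have hn' : (n : ℂ) ≠ 0 := Nat.cast_ne_zero.mpr hn.ne'
    have hbase : ∀ f ∈ {f : UG d → ℂ | ∃ i j : Fin n,
        f = fun M : UG d => (ρ M : Matrix (Fin n) (Fin n) ℂ) i j},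
        Continuous f ∧ ∫ M, Z M * f M ∂μ = f U := by
      intro f hf
      obtain ⟨i, j, rfl⟩ := hf
      refine ⟨entry_cont ρ hcont i j, ?_⟩
      have h_int : ∀ a' b : Fin n, Integrable (fun M : UG d =>
          ((n : ℂ) * (ρ U : Matrix (Fin n) (Fin n) ℂ) a' b) *
            ((ρ M : Matrix (Fin n) (Fin n) ℂ) i j *
              (starRingEnd ℂ) ((ρ M : Matrix (Fin n) (Fin n) ℂ) a' b))) μ :=
        fun a' b => (cont_integrable μ ((entry_cont ρ hcont i j).mul
          (Complex.continuous_conj.comp (entry_cont ρ hcont a' b)))).const_mul _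
      have expand : ∀ M : UG d, Z M * (ρ M : Matrix (Fin n) (Fin n) ℂ) i j
          = ∑ b, ∑ a', ((n : ℂ) * (ρ U : Matrix (Fin n) (Fin n) ℂ) a' b) *
              ((ρ M : Matrix (Fin n) (Fin n) ℂ) i j *
                (starRingEnd ℂ) ((ρ M : Matrix (Fin n) (Fin n) ℂ) a' b)) := by
        intro M
        rw [hZ]
        simp only [Matrix.trace, Matrix.diag_apply, Matrix.mul_apply, Matrix.star_apply, _root_.map_mul,
          map_sum, map_natCast, Complex.star_def, Complex.conj_conj]
        simp only [Finset.mul_sum, Finset.sum_mul]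
        exact Finset.sum_congr rfl fun b _ => Finset.sum_congr rfl fun a' _ => by ring
      calc ∫ M, Z M * (ρ M : Matrix (Fin n) (Fin n) ℂ) i j ∂μ
          = ∫ M, ∑ b, ∑ a', ((n : ℂ) * (ρ U : Matrix (Fin n) (Fin n) ℂ) a' b) *
              ((ρ M : Matrix (Fin n) (Fin n) ℂ) i j *
                (starRingEnd ℂ) ((ρ M : Matrix (Fin n) (Fin n) ℂ) a' b)) ∂μ := by
            congr 1; funext M; exact expand M
        _ = ∑ b, ∑ a', ∫ M, ((n : ℂ) * (ρ U : Matrix (Fin n) (Fin n) ℂ) a' b) *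
              ((ρ M : Matrix (Fin n) (Fin n) ℂ) i j *
                (starRingEnd ℂ) ((ρ M : Matrix (Fin n) (Fin n) ℂ) a' b)) ∂μ := by
            rw [integral_finset_sum _
              (fun b _ => integrable_finset_sum _ (fun a' _ => h_int a' b))]
            exact Finset.sum_congr rfl fun b _ => integral_finset_sum _ (fun a' _ => h_int a' b)
        _ = ∑ b, ∑ a', ((n : ℂ) * (ρ U : Matrix (Fin n) (Fin n) ℂ) a' b) *
              ((if i = a' then 1 else 0) * (if j = b then 1 else 0) / n) := by
            refine Finset.sum_congr rfl fun b _ => Finset.sum_congr rfl fun a' _ => ?_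
            rw [MeasureTheory.integral_const_mul, schur_orth hn μ ρ hcont hirr i j a' b]
        _ = (ρ U : Matrix (Fin n) (Fin n) ℂ) i j := by
            simp only [mul_ite, ite_mul, mul_zero, zero_mul, mul_one, one_mul, zero_div]
            rw [Finset.sum_eq_single j]
            · rw [Finset.sum_eq_single i]
              · simp only [if_pos rfl, if_true]
                field_simp
              · intro a' _ ha'
                simp [Ne.symm ha']
              · intro h; exact absurd (Finset.mem_univ i) h
            · intro b _ hb
              apply Finset.sum_eq_zero
              intro a' _
              simp [Ne.symm hb]
            · intro h; exact absurd (Finset.mem_univ j) h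
    have main := Submodule.span_induction
      (p := fun (f : UG d → ℂ) _ => Continuous f ∧ ∫ M, Z M * f M ∂μ = f U)
      hbase ⟨continuous_const, by simp⟩
      (fun x y hx hy ⟨hxc, hxe⟩ ⟨hyc, hye⟩ => ⟨hxc.add hyc, by
        simp only [Pi.add_apply, mul_add]
        rw [integral_add (cont_integrable μ (f := fun M => Z M * x M) (hZc.mul hxc))
            (cont_integrable μ (f := fun M => Z M * y M) (hZc.mul hyc)),
          hxe, hye]⟩)
      (fun a x hx ⟨hxc, hxe⟩ => ⟨hxc.const_smul a, by
        have e1 : ∀ M : UG d, Z M * (a • x) M = a * (Z M * x M) := by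
          intro M; simp only [Pi.smul_apply, smul_eq_mul]; ring
        calc ∫ M, Z M * (a • x) M ∂μ = ∫ M, a * (Z M * x M) ∂μ := by
              congr 1; funext M; exact e1 M
          _ = a * x U := by rw [MeasureTheory.integral_const_mul, hxe]
          _ = (a • x) U := rfl⟩)
      hp
    exact main.2
end
end

section
/- Let X ⊆ U(d) be a finite set with at least two elements and let α be a real number with 0 ≤ α < 1 such that |tr(U*M)|² = α for all distinct U, M ∈ X (X is a 1-distance set with value α). Then |X| ≤ (d² − α)/(1 − α), and equality holds if and only if X is a unitary 1-design. -/
open MeasureTheory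

noncomputable section

namespace Stmt11Aux


variable {d : ℕ}

/-- entry function -/
def E (s : Fin d × Fin d) (U : UG d) : ℂ := (U : Matrix (Fin d) (Fin d) ℂ) s.1 s.2

lemma continuous_E (s : Fin d × Fin d) : Continuous (E (d := d) s) :=
  (continuous_apply s.2).comp ((continuous_apply s.1).comp continuous_subtype_val)

instance : CompactSpace (UG d) := by
  have hclosed : IsClosed (Matrix.unitaryGroup (Fin d) ℂ : Set (Matrix (Fin d) (Fin d) ℂ)) := by
    have h1 : IsClosed {M : Matrix (Fin d) (Fin d) ℂ | star M * M = 1} :=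
      isClosed_eq (continuous_star.matrix_mul continuous_id) continuous_const
    have h2 : IsClosed {M : Matrix (Fin d) (Fin d) ℂ | M * star M = 1} :=
      isClosed_eq (continuous_id.matrix_mul continuous_star) continuous_const
    have : (Matrix.unitaryGroup (Fin d) ℂ : Set (Matrix (Fin d) (Fin d) ℂ)) =
        {M | star M * M = 1} ∩ {M | M * star M = 1} := by
      ext M
      simp [SetLike.mem_coe, Unitary.mem_iff, Set.mem_inter_iff]
    rw [this]
    exact h1.inter h2
  have hK : IsCompact (Set.pi Set.univ fun _ : Fin d =>
      Set.pi Set.univ fun _ : Fin d => Metric.closedBall (0 : ℂ) 1) :=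
    isCompact_univ_pi fun _ => isCompact_univ_pi fun _ => isCompact_closedBall 0 1
  have hcomp : IsCompact (Matrix.unitaryGroup (Fin d) ℂ : Set (Matrix (Fin d) (Fin d) ℂ)) := by
    refine IsCompact.of_isClosed_subset hK hclosed ?_
    intro M hM
    change (Matrix.of.symm M : Fin d → Fin d → ℂ) ∈ Set.pi Set.univ
      (fun _ : Fin d => Set.pi Set.univ fun _ : Fin d => Metric.closedBall (0 : ℂ) 1)
    rw [Set.mem_univ_pi]
    intro i
    rw [Set.mem_univ_pi]
    intro j
    rw [Metric.mem_closedBall, dist_zero_right]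
    exact entry_norm_bound_of_unitary hM i j
  exact isCompact_iff_compactSpace.mp hcomp

instance : IsTopologicalGroup (UG d) where
  continuous_mul := by
    apply continuous_induced_rng.2
    exact (continuous_subtype_val.comp continuous_fst).matrix_mul
      (continuous_subtype_val.comp continuous_snd)
  continuous_inv := by
    apply continuous_induced_rng.2
    exact continuous_star.comp continuous_subtype_val

lemma integrable_cont (f : UG d → ℂ) (hf : Continuous f) (μ : Measure (UG d))
    [IsFiniteMeasure μ] : Integrable f μ :=
  hf.integrable_of_hasCompactSupport (HasCompactSupport.of_compactSpace f)


/-- diagonal sign unitary -/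
def dg (a : Fin d) : UG d :=
  ⟨Matrix.diagonal (fun k => if k = a then (-1 : ℂ) else 1), by
    rw [Matrix.mem_unitaryGroup_iff']
    rw [Matrix.star_eq_conjTranspose, Matrix.diagonal_conjTranspose,
      Matrix.diagonal_mul_diagonal]
    convert Matrix.diagonal_one using 2
    ext k
    by_cases h : k = a <;> simp [h, Pi.star_apply]⟩

lemma dg_mul_apply (a : Fin d) (U : UG d) (s : Fin d × Fin d) :
    E s (dg a * U) = (if s.1 = a then (-1:ℂ) else 1) * E s U := by
  have : E s (dg a * U) =
      (Matrix.diagonal (fun k => if k = a then (-1 : ℂ) else 1) *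
        (U : Matrix (Fin d) (Fin d) ℂ)) s.1 s.2 := rfl
  rw [this, Matrix.diagonal_mul]
  rfl

lemma mul_dg_apply (a : Fin d) (U : UG d) (s : Fin d × Fin d) :
    E s (U * dg a) = E s U * (if s.2 = a then (-1:ℂ) else 1) := by
  have : E s (U * dg a) =
      ((U : Matrix (Fin d) (Fin d) ℂ) *
        Matrix.diagonal (fun k => if k = a then (-1 : ℂ) else 1)) s.1 s.2 := rfl
  rw [this, Matrix.mul_diagonal]
  rfl

/-- permutation unitary -/
def pmat (σ : Equiv.Perm (Fin d)) : Matrix (Fin d) (Fin d) ℂ :=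
  Matrix.of fun i j => if σ i = j then 1 else 0

lemma pmat_mul_apply (σ : Equiv.Perm (Fin d)) (M : Matrix (Fin d) (Fin d) ℂ) (i j : Fin d) :
    (pmat σ * M) i j = M (σ i) j := by
  rw [Matrix.mul_apply]
  simp [pmat]

lemma star_pmat (σ : Equiv.Perm (Fin d)) : star (pmat σ) = pmat σ⁻¹ := by
  ext i j
  simp only [Matrix.star_apply, pmat, Matrix.of_apply]
  by_cases h : σ j = i
  · have h2 : σ⁻¹ i = j := by rw [Equiv.Perm.inv_eq_iff_eq]; exact h.symm
    simp [h, h2]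
  · have h2 : ¬ σ⁻¹ i = j := by rw [Equiv.Perm.inv_eq_iff_eq]; exact fun hh => h hh.symm
    simpa [h] using h2

def pg (σ : Equiv.Perm (Fin d)) : UG d :=
  ⟨pmat σ, by
    rw [Matrix.mem_unitaryGroup_iff', Matrix.star_eq_conjTranspose,
        ← Matrix.star_eq_conjTranspose, star_pmat]
    ext i j
    rw [pmat_mul_apply]
    simp [pmat, Matrix.one_apply]⟩

lemma pg_mul_apply (σ : Equiv.Perm (Fin d)) (U : UG d) (s : Fin d × Fin d) :
    E s (pg σ * U) = E (σ s.1, s.2) U := by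
  show (pmat σ * (U : Matrix (Fin d) (Fin d) ℂ)) s.1 s.2 = _
  rw [pmat_mul_apply]
  rfl


variable (μ : Measure (UG d)) [μ.IsHaarMeasure] [IsProbabilityMeasure μ]

lemma right_invariant : μ.IsMulRightInvariant := by
  constructor
  intro g
  haveI : IsProbabilityMeasure (μ.map (· * g)) :=
    Measure.isProbabilityMeasure_map (continuous_mul_right g).measurable.aemeasurable
  exact Measure.isHaarMeasure_eq_of_isProbabilityMeasure (μ.map (· * g)) μ

lemma integrable_EE (s r : Fin d × Fin d) :
    Integrable (fun U => E s U * (starRingEnd ℂ) (E r U)) μ :=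
  integrable_cont _ ((continuous_E s).mul (Complex.continuous_conj.comp (continuous_E r))) μ

lemma integral_EE (hd : 0 < d) (s r : Fin d × Fin d) :
    (∫ U, E s U * (starRingEnd ℂ) (E r U) ∂μ) = if s = r then (1 / (d:ℂ)) else 0 := by
  haveI := right_invariant μ
  by_cases h1 : s.1 = r.1
  · by_cases h2 : s.2 = r.2
    · -- diagonal case
      have hsr : s = r := Prod.ext h1 h2
      subst hsr
      rw [if_pos rfl]
      obtain ⟨a, b⟩ := s
      set J : Fin d → ℂ := fun a' => ∫ U, E (a', b) U * (starRingEnd ℂ) (E (a', b) U) ∂μ with hJ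
      have hconst : ∀ a' : Fin d, J a' = J a := by
        intro a'
        have := integral_mul_left_eq_self (μ := μ)
          (fun U => E (a', b) U * (starRingEnd ℂ) (E (a', b) U)) (pg (Equiv.swap a' a))
        have heq : ∀ U : UG d, E (a', b) (pg (Equiv.swap a' a) * U) = E (a, b) U := by
          intro U
          rw [pg_mul_apply]
          simp [Equiv.swap_apply_left]
        simp only [heq] at this
        exact this.symm
      have hsum : ∑ a' : Fin d, J a' = 1 := by
        rw [hJ]
        rw [← integral_finset_sum]
        · have hpt : ∀ U : UG d,
              (∑ a' : Fin d, E (a', b) U * (starRingEnd ℂ) (E (a', b) U)) = 1 := by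
            intro U
            have hU : star (U : Matrix (Fin d) (Fin d) ℂ) * (U : Matrix (Fin d) (Fin d) ℂ) = 1 :=
              Matrix.UnitaryGroup.star_mul_self U
            have : ((star (U : Matrix (Fin d) (Fin d) ℂ) * (U : Matrix (Fin d) (Fin d) ℂ)) b b)
                = ∑ a' : Fin d, E (a', b) U * (starRingEnd ℂ) (E (a', b) U) := by
              rw [Matrix.mul_apply]
              refine Finset.sum_congr rfl fun k _ => ?_
              simp only [Matrix.star_apply, E]
              exact mul_comm _ _
            rw [← this, hU, Matrix.one_apply_eq]
          simp only [hpt]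
          simp
        · intro i _
          exact integrable_EE μ _ _
      have hkey : (d : ℂ) * J a = 1 := by
        have h5 : ∑ a' : Fin d, J a' = ∑ a' : Fin d, J a := Finset.sum_congr rfl fun a' _ => hconst a'
        rw [hsum] at h5
        rw [Finset.sum_const, Finset.card_univ, Fintype.card_fin, nsmul_eq_mul] at h5
        exact h5.symm
      have hd' : (d : ℂ) ≠ 0 := Nat.cast_ne_zero.mpr hd.ne'
      show J a = 1 / (d : ℂ)
      rw [eq_div_iff hd', mul_comm]
      exact hkey
    · -- column indices differ: right multiplication
      rw [if_neg (fun hx => h2 (by rw [hx]))]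
      have := integral_mul_right_eq_self (μ := μ)
        (fun U => E s U * (starRingEnd ℂ) (E r U)) (dg s.2)
      have heq : ∀ U : UG d, E s (U * dg s.2) * (starRingEnd ℂ) (E r (U * dg s.2))
          = - (E s U * (starRingEnd ℂ) (E r U)) := by
        intro U
        rw [mul_dg_apply, mul_dg_apply, if_pos rfl,
          if_neg (fun hh : r.2 = s.2 => h2 hh.symm), mul_one]
        ring
      simp only [heq, integral_neg] at this
      linear_combination (-1/2 : ℂ) * this
  · -- row indices differ: left multiplication
    rw [if_neg (fun hx => h1 (by rw [hx]))]
    have := integral_mul_left_eq_self (μ := μ)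
      (fun U => E s U * (starRingEnd ℂ) (E r U)) (dg s.1)
    have heq : ∀ U : UG d, E s (dg s.1 * U) * (starRingEnd ℂ) (E r (dg s.1 * U))
        = - (E s U * (starRingEnd ℂ) (E r U)) := by
      intro U
      rw [dg_mul_apply, dg_mul_apply, if_pos rfl,
        if_neg (fun hh : r.1 = s.1 => h1 hh.symm), one_mul]
      ring
    simp only [heq, integral_neg] at this
    linear_combination (-1/2 : ℂ) * this


lemma sum_comm4 {M' : Type*} [AddCommMonoid M'] {α β γ δ : Type*}
    (s : Finset α) (u : Finset β) (v : Finset γ) (w : Finset δ) (f : α → β → γ → δ → M') :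
    ∑ a ∈ s, ∑ b ∈ u, ∑ c ∈ v, ∑ e ∈ w, f a b c e
      = ∑ c ∈ v, ∑ e ∈ w, ∑ a ∈ s, ∑ b ∈ u, f a b c e := by
  have h : ∀ a, ∑ b ∈ u, ∑ c ∈ v, ∑ e ∈ w, f a b c e
      = ∑ c ∈ v, ∑ e ∈ w, ∑ b ∈ u, f a b c e := by
    intro a
    rw [Finset.sum_comm]
    exact Finset.sum_congr rfl fun c _ => Finset.sum_comm
  simp only [h]
  rw [Finset.sum_comm]
  exact Finset.sum_congr rfl fun c _ => Finset.sum_comm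

lemma trace_eq (U M : UG d) :
    Matrix.trace (star (U : Matrix (Fin d) (Fin d) ℂ) * (M : Matrix (Fin d) (Fin d) ℂ))
      = ∑ s : Fin d × Fin d, (starRingEnd ℂ) (E s U) * E s M := by
  rw [Matrix.trace, Fintype.sum_prod_type]
  rw [Finset.sum_comm]
  refine Finset.sum_congr rfl fun j _ => ?_
  rw [Matrix.diag, Matrix.mul_apply]
  refine Finset.sum_congr rfl fun k _ => ?_
  simp only [Matrix.star_apply, E]
  rfl

def TX (X : Finset (UG d)) (s r : Fin d × Fin d) : ℂ :=
  ∑ U ∈ X, E s U * (starRingEnd ℂ) (E r U)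

def tX (X : Finset (UG d)) (s : Fin d × Fin d) : ℝ :=
  ∑ U ∈ X, Complex.normSq (E s U)

lemma TX_diag (X : Finset (UG d)) (s : Fin d × Fin d) : TX X s s = ((tX X s : ℝ) : ℂ) := by
  rw [TX, tX]
  push_cast
  exact Finset.sum_congr rfl fun U _ => (Complex.mul_conj (E s U))

lemma col_sum (U : UG d) (b : Fin d) :
    ∑ a : Fin d, (Complex.normSq (E (a, b) U) : ℂ) = 1 := by
  have hU : star (U : Matrix (Fin d) (Fin d) ℂ) * (U : Matrix (Fin d) (Fin d) ℂ) = 1 :=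
    Matrix.UnitaryGroup.star_mul_self U
  have h : ((star (U : Matrix (Fin d) (Fin d) ℂ) * (U : Matrix (Fin d) (Fin d) ℂ)) b b)
      = ∑ a : Fin d, (Complex.normSq (E (a, b) U) : ℂ) := by
    rw [Matrix.mul_apply]
    refine Finset.sum_congr rfl fun k _ => ?_
    rw [← Complex.mul_conj]
    simp only [Matrix.star_apply, E]
    exact mul_comm _ _
  rw [← h, hU, Matrix.one_apply_eq]

lemma entry_sq_sum (U : UG d) : ∑ s : Fin d × Fin d, Complex.normSq (E s U) = d := by
  have h : ((∑ s : Fin d × Fin d, Complex.normSq (E s U) : ℝ) : ℂ) = ((d : ℝ) : ℂ) := by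
    push_cast
    rw [Fintype.sum_prod_type, Finset.sum_comm]
    rw [Finset.sum_congr rfl fun b (_ : b ∈ Finset.univ) => col_sum U b]
    simp
  exact_mod_cast h

lemma tX_sum (X : Finset (UG d)) : ∑ s : Fin d × Fin d, tX X s = X.card * d := by
  rw [show (∑ s : Fin d × Fin d, tX X s) = ∑ s : Fin d × Fin d, ∑ U ∈ X, Complex.normSq (E s U)
    from rfl, Finset.sum_comm]
  rw [Finset.sum_congr rfl fun U _ => entry_sq_sum U]
  rw [Finset.sum_const, nsmul_eq_mul]

lemma trIP_cast (U M : UG d) :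
    ((trIP U M : ℝ) : ℂ) = ∑ s : Fin d × Fin d, ∑ r : Fin d × Fin d,
      ((starRingEnd ℂ) (E s U) * E r U) * (E s M * (starRingEnd ℂ) (E r M)) := by
  have h0 : ((trIP U M : ℝ) : ℂ) =
      Matrix.trace (star (U : Matrix (Fin d) (Fin d) ℂ) * (M : Matrix (Fin d) (Fin d) ℂ)) *
      (starRingEnd ℂ) (Matrix.trace (star (U : Matrix (Fin d) (Fin d) ℂ) *
        (M : Matrix (Fin d) (Fin d) ℂ))) := by
    rw [trIP, Complex.sq_norm, Complex.mul_conj]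
  rw [h0, trace_eq]
  rw [map_sum]
  rw [Finset.sum_mul_sum]
  refine Finset.sum_congr rfl fun s _ => Finset.sum_congr rfl fun r _ => ?_
  simp only [map_mul, Complex.conj_conj, RingHomCompTriple.comp_apply, RingHom.id_apply]
  ring

lemma frame_eq (X : Finset (UG d)) :
    ∑ U ∈ X, ∑ M ∈ X, trIP U M = ∑ s : Fin d × Fin d, ∑ r : Fin d × Fin d,
      Complex.normSq (TX X s r) := by
  have h : ((∑ U ∈ X, ∑ M ∈ X, trIP U M : ℝ) : ℂ)
      = ((∑ s : Fin d × Fin d, ∑ r : Fin d × Fin d, Complex.normSq (TX X s r) : ℝ) : ℂ) := by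
    push_cast
    rw [Finset.sum_congr rfl fun U (_ : U ∈ X) => Finset.sum_congr rfl
      fun M (_ : M ∈ X) => trIP_cast U M]
    rw [sum_comm4]
    refine Finset.sum_congr rfl fun s _ => Finset.sum_congr rfl fun r _ => ?_
    rw [← Finset.sum_mul_sum]
    have h1 : (∑ a ∈ X, (starRingEnd ℂ) (E s a) * E r a) = (starRingEnd ℂ) (TX X s r) := by
      rw [TX, map_sum]
      refine Finset.sum_congr rfl fun a _ => ?_
      rw [map_mul, Complex.conj_conj]
    rw [h1]
    show (starRingEnd ℂ) (TX X s r) * TX X s r = _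
    rw [← Complex.normSq_eq_conj_mul_self]
  exact_mod_cast h


lemma gen_eq (i j p q : Fin 1 → Fin d) :
    (fun U : UG d => (∏ k, (U : Matrix (Fin d) (Fin d) ℂ) (i k) (j k)) *
        ∏ k, (starRingEnd ℂ) ((U : Matrix (Fin d) (Fin d) ℂ) (p k) (q k)))
      = fun U : UG d => E (i 0, j 0) U * (starRingEnd ℂ) (E (p 0, q 0) U) := by
  funext U
  rw [Fin.prod_univ_one, Fin.prod_univ_one]
  rfl

lemma gen_mem (s r : Fin d × Fin d) :
    (fun U : UG d => E s U * (starRingEnd ℂ) (E r U)) ∈ homSpace d 1 1 := by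
  refine Submodule.subset_span ?_
  refine ⟨fun _ => s.1, fun _ => s.2, fun _ => r.1, fun _ => r.2, ?_⟩
  rw [gen_eq]

lemma design_iff_T (hd : 0 < d) (X : Finset (UG d)) (hne : X.Nonempty) :
    IsUnitaryDesign d 1 μ X ↔
      ∀ s r : Fin d × Fin d, TX X s r
        = (X.card : ℂ) * (if s = r then 1 / (d : ℂ) else 0) := by
  have hcard : (X.card : ℂ) ≠ 0 := Nat.cast_ne_zero.mpr (Finset.card_ne_zero_of_mem hne.choose_spec)
  constructor
  · intro hdes s r
    have h1 := hdes.2 _ (gen_mem s r)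
    rw [integral_EE μ hd s r] at h1
    rw [show (∑ U ∈ X, E s U * (starRingEnd ℂ) (E r U)) = TX X s r from rfl] at h1
    rw [← h1]
    field_simp
  · intro hT
    refine ⟨hne, ?_⟩
    intro f hf
    refine (Submodule.span_induction
      (p := fun f _ => ((1 / (X.card : ℂ)) * ∑ U ∈ X, f U = ∫ U, f U ∂μ) ∧ Integrable f μ)
      ?_ ?_ ?_ ?_ hf).1
    · rintro g ⟨i, j, p, q, rfl⟩
      rw [gen_eq]
      constructor
      · rw [integral_EE μ hd]
        rw [show (∑ U ∈ X, E (i 0, j 0) U * (starRingEnd ℂ) (E (p 0, q 0) U))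
          = TX X (i 0, j 0) (p 0, q 0) from rfl, hT]
        field_simp
      · exact integrable_EE μ _ _
    · exact ⟨by simp, integrable_zero _ _ _⟩
    · rintro g h _ _ ⟨hg1, hg2⟩ ⟨hh1, hh2⟩
      refine ⟨?_, hg2.add hh2⟩
      rw [show (∫ U, (g + h) U ∂μ) = ∫ U, (g U + h U) ∂μ from rfl, integral_add hg2 hh2,
        ← hg1, ← hh1]
      simp only [Pi.add_apply]
      rw [Finset.sum_add_distrib]
      ring
    · rintro c g _ ⟨hg1, hg2⟩
      refine ⟨?_, hg2.smul c⟩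
      rw [show (∫ U, (c • g) U ∂μ) = ∫ U, c • (g U) ∂μ from rfl, integral_smul, ← hg1]
      simp only [Pi.smul_apply, smul_eq_mul, Finset.mul_sum]
      refine Finset.sum_congr rfl fun U _ => ?_
      ring

end Stmt11Aux


open Stmt11Aux in
theorem stmt_11 (d : ℕ)
    (μ : Measure (UG d)) [μ.IsHaarMeasure] [IsProbabilityMeasure μ]
    (X : Finset (UG d)) (hX : 2 ≤ X.card)
    (α : ℝ) (hα0 : 0 ≤ α) (hα1 : α < 1)
    (hdist : ∀ U ∈ X, ∀ M ∈ X, U ≠ M → trIP U M = α) :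
    (X.card : ℝ) ≤ ((d : ℝ) ^ 2 - α) / (1 - α) ∧
      ((X.card : ℝ) = ((d : ℝ) ^ 2 - α) / (1 - α) ↔ IsUnitaryDesign d 1 μ X) := by
  classical
  rcases Nat.eq_zero_or_pos d with hd0 | hd
  · exfalso
    subst hd0
    have hsub : ∀ a b : UG 0, a = b := by
      intro a b
      apply Subtype.ext
      ext i j
      exact i.elim0
    have : X.card ≤ 1 := Finset.card_le_one.mpr fun a _ b _ => hsub a b
    omega
  have hne : X.Nonempty := Finset.card_pos.mp (by omega)
  set n : ℝ := (X.card : ℝ) with hn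
  have hn2 : (2 : ℝ) ≤ n := by rw [hn]; exact_mod_cast hX
  have hn0 : (0 : ℝ) < n := by linarith
  have hdR : (0 : ℝ) < (d : ℝ) := by exact_mod_cast hd
  have h1α : (0 : ℝ) < 1 - α := by linarith
  have hdiagIP : ∀ U : UG d, trIP U U = (d : ℝ) ^ 2 := by
    intro U
    rw [trIP, Matrix.UnitaryGroup.star_mul_self U, Matrix.trace_one]
    simp
  have hF : ∑ U ∈ X, ∑ M ∈ X, trIP U M = n * ((d : ℝ) ^ 2 + (n - 1) * α) := by
    have hrow : ∀ U ∈ X, ∑ M ∈ X, trIP U M = (d : ℝ) ^ 2 + (n - 1) * α := by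
      intro U hU
      rw [← Finset.add_sum_erase X _ hU, hdiagIP]
      congr 1
      rw [Finset.sum_congr rfl fun M hM => hdist U hU M (Finset.mem_of_mem_erase hM)
        (Ne.symm (Finset.ne_of_mem_erase hM))]
      rw [Finset.sum_const, nsmul_eq_mul, Finset.card_erase_of_mem hU]
      congr 1
      rw [hn, Nat.cast_sub (by omega)]
      simp
    rw [Finset.sum_congr rfl hrow, Finset.sum_const, nsmul_eq_mul]
  have hF2 := frame_eq X
  have hts : ∀ s : Fin d × Fin d, Complex.normSq (TX X s s) = (tX X s) ^ 2 := by
    intro s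
    rw [TX_diag, Complex.normSq_ofReal]
    ring
  have htsum : ∑ s : Fin d × Fin d, tX X s = n * d := by
    rw [tX_sum]
  have hcardP : (Finset.univ : Finset (Fin d × Fin d)).card = d * d := by
    simp [Finset.card_univ]
  have hexp : ∑ s : Fin d × Fin d, (tX X s - n / d) ^ 2
      = (∑ s : Fin d × Fin d, (tX X s) ^ 2) - n ^ 2 := by
    have h1 : ∀ s : Fin d × Fin d, (tX X s - n / d) ^ 2
        = (tX X s) ^ 2 - 2 * (n / d) * tX X s + (n / d) ^ 2 := fun s => by ring
    rw [Finset.sum_congr rfl fun s _ => h1 s]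
    rw [Finset.sum_add_distrib, Finset.sum_sub_distrib, ← Finset.mul_sum, htsum,
      Finset.sum_const, hcardP, nsmul_eq_mul]
    push_cast
    field_simp
    ring
  have hsq_nonneg : 0 ≤ ∑ s : Fin d × Fin d, (tX X s - n / d) ^ 2 :=
    Finset.sum_nonneg fun s _ => sq_nonneg _
  have hCS : n ^ 2 ≤ ∑ s : Fin d × Fin d, (tX X s) ^ 2 := by linarith [hexp]
  have hchain : ∑ s : Fin d × Fin d, (tX X s) ^ 2
      ≤ ∑ s : Fin d × Fin d, ∑ r : Fin d × Fin d, Complex.normSq (TX X s r) := by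
    refine Finset.sum_le_sum fun s _ => ?_
    rw [← hts]
    exact Finset.single_le_sum (fun r _ => Complex.normSq_nonneg _) (Finset.mem_univ s)
  have hFge' : n ^ 2 ≤ ∑ U ∈ X, ∑ M ∈ X, trIP U M := by
    rw [hF2]; linarith
  have hFge : n ^ 2 ≤ n * ((d : ℝ) ^ 2 + (n - 1) * α) := by
    rw [← hF]; exact hFge'
  have hub : n ≤ (d : ℝ) ^ 2 + (n - 1) * α := by nlinarith [hFge, hn0]
  refine ⟨?_, ?_, ?_⟩
  · rw [le_div_iff₀ h1α]
    nlinarith [hub]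
  · -- equality → design
    intro heq
    rw [eq_div_iff h1α.ne'] at heq
    have hFn : ∑ U ∈ X, ∑ M ∈ X, trIP U M = n ^ 2 := by
      rw [hF]; linear_combination (-n) * heq
    have hA : ∑ s : Fin d × Fin d, (tX X s) ^ 2 = n ^ 2 := by
      have hB : ∑ s : Fin d × Fin d, ∑ r : Fin d × Fin d, Complex.normSq (TX X s r) = n ^ 2 := by
        rw [← hF2, hFn]
      linarith
    have hBA : ∑ s : Fin d × Fin d, Complex.normSq (TX X s s)
        = ∑ s : Fin d × Fin d, ∑ r : Fin d × Fin d, Complex.normSq (TX X s r) := by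
      rw [← hF2, hFn, Finset.sum_congr rfl fun s _ => hts s, hA]
    have hteq : ∀ s : Fin d × Fin d, tX X s = n / d := by
      intro s
      have h0 : ∑ s : Fin d × Fin d, (tX X s - n / d) ^ 2 = 0 := by rw [hexp, hA]; ring
      have h5 := (Finset.sum_eq_zero_iff_of_nonneg fun s _ => sq_nonneg _).1 h0 s
        (Finset.mem_univ s)
      have h6 : tX X s - n / d = 0 := by
        exact pow_eq_zero_iff two_ne_zero |>.mp h5
      linarith
    have hdiagsum : ∀ s ∈ (Finset.univ : Finset (Fin d × Fin d)),
        Complex.normSq (TX X s s) = ∑ r : Fin d × Fin d, Complex.normSq (TX X s r) :=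
      (Finset.sum_eq_sum_iff_of_le fun s _ =>
        Finset.single_le_sum (fun r _ => Complex.normSq_nonneg _) (Finset.mem_univ s)).1 hBA
    have hoff : ∀ s r : Fin d × Fin d, s ≠ r → TX X s r = 0 := by
      intro s r hsr
      have h2 : Complex.normSq (TX X s s)
          + ∑ r' ∈ Finset.univ.erase s, Complex.normSq (TX X s r')
          = ∑ r' : Fin d × Fin d, Complex.normSq (TX X s r') :=
        Finset.add_sum_erase Finset.univ (fun r' => Complex.normSq (TX X s r'))
          (Finset.mem_univ s)
      have h3 : ∑ r' ∈ Finset.univ.erase s, Complex.normSq (TX X s r') = 0 := by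
        have h4 := hdiagsum s (Finset.mem_univ s)
        linarith
      have h4 := (Finset.sum_eq_zero_iff_of_nonneg fun r' _ => Complex.normSq_nonneg _).1 h3 r
        (Finset.mem_erase.2 ⟨Ne.symm hsr, Finset.mem_univ r⟩)
      exact Complex.normSq_eq_zero.1 h4
    refine (design_iff_T μ hd X hne).2 ?_
    intro s r
    by_cases hsr : s = r
    · subst hsr
      rw [TX_diag, hteq s, if_pos rfl, hn]
      push_cast
      field_simp
    · rw [hoff s r hsr, if_neg hsr, mul_zero]
  · -- design → equality
    intro hdes
    have hT := (design_iff_T μ hd X hne).1 hdes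
    have hnormSq : ∀ s r : Fin d × Fin d, Complex.normSq (TX X s r)
        = if s = r then (n / d) ^ 2 else 0 := by
      intro s r
      rw [hT s r]
      by_cases hsr : s = r
      · rw [if_pos hsr, if_pos hsr]
        have hcast : (X.card : ℂ) * (1 / (d : ℂ)) = (((n / d : ℝ)) : ℂ) := by
          rw [hn]; push_cast; ring
        rw [hcast, Complex.normSq_ofReal]
        ring
      · rw [if_neg hsr, if_neg hsr, mul_zero, map_zero]
    have hFval : ∑ U ∈ X, ∑ M ∈ X, trIP U M = n ^ 2 := by
      rw [hF2]
      rw [Finset.sum_congr rfl fun s _ => Finset.sum_congr rfl fun r _ => hnormSq s r]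
      have hrow : ∀ s : Fin d × Fin d,
          (∑ r : Fin d × Fin d, if s = r then (n / d) ^ 2 else (0 : ℝ)) = (n / d) ^ 2 := by
        intro s
        rw [Finset.sum_ite_eq]
        simp
      rw [Finset.sum_congr rfl fun s _ => hrow s, Finset.sum_const, hcardP, nsmul_eq_mul]
      push_cast
      field_simp
    rw [eq_div_iff h1α.ne']
    have h7 : n * n = n * ((d : ℝ) ^ 2 + (n - 1) * α) := by
      rw [← hF, hFval]; ring
    have h6 : n = (d : ℝ) ^ 2 + (n - 1) * α := mul_left_cancel₀ hn0.ne' h7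
    linear_combination h6
end
end

section
/- Let G be a finite group and ρ : G → U(d) a group homomorphism, with character χ(g) = tr(ρ(g)). Then the family (ρ(g))_{g∈G} averages Hom(t,t) correctly — i.e., for every f ∈ Hom(t,t), (1/|G|)·∑_{g∈G} f(ρ(g)) = ∫_{U(d)} f(U) dU — if and only if (1/|G|)·∑_{g∈G} |χ(g)|^{2t} = ∫_{U(d)} |tr(U)|^{2t} dU. -/
open MeasureTheory ComplexConjugate

noncomputable section

abbrev Mix (d t : ℕ) := ((Fin t → Fin d) × (Fin t → Fin d)) × ((Fin t → Fin d) × (Fin t → Fin d))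

def mon (d t : ℕ) (x : Mix d t) : UG d → ℂ := fun U =>
  (∏ k, (U : Matrix (Fin d) (Fin d) ℂ) (x.1.1 k) (x.1.2 k)) *
    ∏ k, (starRingEnd ℂ) ((U : Matrix (Fin d) (Fin d) ℂ) (x.2.1 k) (x.2.2 k))

lemma zpow_conj (t : ℕ) (z : ℂ) :
    z ^ t * (starRingEnd ℂ) z ^ t = ((‖z‖ ^ (2 * t) : ℝ) : ℂ) := by
  rw [← mul_pow, Complex.mul_conj, ← Complex.ofReal_pow, ← Complex.sq_norm, ← pow_mul]

lemma key_sum (d t : ℕ) (U V : UG d) :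
    ∑ x : Mix d t, mon d t x U * (starRingEnd ℂ) (mon d t x V) =
      ((‖Matrix.trace (star (V : Matrix (Fin d) (Fin d) ℂ) *
        (U : Matrix (Fin d) (Fin d) ℂ))‖ ^ (2 * t) : ℝ) : ℂ) := by
  set MU := (U : Matrix (Fin d) (Fin d) ℂ)
  set MV := (V : Matrix (Fin d) (Fin d) ℂ)
  set f : Fin d × Fin d → ℂ := fun ab => MU ab.1 ab.2 * (starRingEnd ℂ) (MV ab.1 ab.2) with hf
  set z : ℂ := Matrix.trace (star MV * MU) with hzdef
  have hz : z = ∑ ab : Fin d × Fin d, f ab := by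
    rw [Fintype.sum_prod_type, hzdef, Matrix.trace]
    rw [Finset.sum_comm]
    congr 1; ext b
    simp [Matrix.diag, Matrix.mul_apply, Matrix.star_apply, hf, mul_comm]
  set F : (Fin t → Fin d) × (Fin t → Fin d) → ℂ := fun y => ∏ k, f (y.1 k, y.2 k) with hF
  have hfac : ∀ x : Mix d t, mon d t x U * (starRingEnd ℂ) (mon d t x V)
      = F x.1 * (starRingEnd ℂ) (F x.2) := by
    intro x
    simp only [mon, hF, hf, map_prod, map_mul, Complex.conj_conj, Finset.prod_mul_distrib]
    ring
  have hsumF : ∑ y, F y = z ^ t := by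
    rw [hz, Fintype.sum_pow f t]
    refine (Fintype.sum_equiv (Equiv.arrowProdEquivProdArrow (Fin t) (fun _ => Fin d) (fun _ => Fin d))
      (fun w => ∏ k, f (w k)) F ?_).symm
    intro w
    simp [hF, Equiv.arrowProdEquivProdArrow]
  calc ∑ x : Mix d t, mon d t x U * (starRingEnd ℂ) (mon d t x V)
      = ∑ y1 : (Fin t → Fin d) × (Fin t → Fin d), ∑ y2, F y1 * (starRingEnd ℂ) (F y2) := by
        rw [Fintype.sum_prod_type]; exact Finset.sum_congr rfl fun y1 _ =>
          Finset.sum_congr rfl fun y2 _ => hfac (y1, y2)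
    _ = (∑ y, F y) * ∑ y2, (starRingEnd ℂ) (F y2) := by rw [Finset.sum_mul_sum]
    _ = z ^ t * (starRingEnd ℂ) z ^ t := by rw [← map_sum, hsumF, map_pow]
    _ = _ := zpow_conj t z

instance inst_s19 (d : ℕ) : CompactSpace (UG d) := by
  suffices h : IsCompact (Matrix.unitaryGroup (Fin d) ℂ : Set (Matrix (Fin d) (Fin d) ℂ)) from
    isCompact_iff_compactSpace.mp h
  have hsub : (Matrix.unitaryGroup (Fin d) ℂ : Set (Matrix (Fin d) (Fin d) ℂ)) ⊆
      Set.pi Set.univ (fun _ : Fin d => Set.pi Set.univ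
        fun _ : Fin d => Metric.closedBall (0:ℂ) 1) := by
    intro M hM i _ j _
    simp only [Metric.mem_closedBall, dist_zero_right]
    have h1 : M * star M = 1 := hM.2
    have : ∑ k, Complex.normSq (M i k) = 1 := by
      have := congrArg (fun N => N i i) h1
      simp [Matrix.mul_apply, Matrix.one_apply, Matrix.star_apply, Complex.mul_conj,
        ← Complex.ofReal_sum] at this
      exact_mod_cast this
    have hle : Complex.normSq (M i j) ≤ 1 := by
      rw [← this]
      exact Finset.single_le_sum (fun k _ => Complex.normSq_nonneg _) (Finset.mem_univ j)
    have habs : ‖M i j‖ ^ 2 ≤ 1 := by rwa [Complex.sq_norm]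
    have := norm_nonneg (M i j)
    nlinarith
  have hcl : IsClosed (Matrix.unitaryGroup (Fin d) ℂ : Set (Matrix (Fin d) (Fin d) ℂ)) := by
    have h1 : IsClosed {M : Matrix (Fin d) (Fin d) ℂ | star M * M = 1} :=
      isClosed_eq (((continuous_id (X := Matrix (Fin d) (Fin d) ℂ)).matrix_conjTranspose).matrix_mul continuous_id) continuous_const
    have h2 : IsClosed {M : Matrix (Fin d) (Fin d) ℂ | M * star M = 1} :=
      isClosed_eq ((continuous_id (X := Matrix (Fin d) (Fin d) ℂ)).matrix_mul (continuous_id.matrix_conjTranspose)) continuous_const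
    exact (h1.inter h2)
  exact IsCompact.of_isClosed_subset
    ((isCompact_univ_pi fun _ => isCompact_univ_pi fun _ => isCompact_closedBall 0 1)) hcl hsub

lemma mon_continuous (d t : ℕ) (x : Mix d t) : Continuous (mon d t x) := by
  unfold mon
  refine Continuous.mul ?_ ?_
  · exact continuous_finset_prod _ fun k _ => continuous_subtype_val.matrix_elem _ _
  · exact continuous_finset_prod _ fun k _ =>
      (continuous_subtype_val.matrix_elem _ _).star

lemma cont_integrable {d : ℕ} (μ : Measure (UG d)) [μ.IsHaarMeasure]
    {f : UG d → ℂ} (hf : Continuous f) : Integrable f μ :=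
  hf.integrable_of_hasCompactSupport
    (IsCompact.of_isClosed_subset isCompact_univ (isClosed_tsupport f) (Set.subset_univ _))

section main
variable (d t : ℕ) (μ : Measure (UG d)) [μ.IsHaarMeasure] [IsProbabilityMeasure μ]

/-- the real integral `∫ |tr U|^{2t}` -/
def Ival : ℝ := ∫ U, ‖Matrix.trace (U : Matrix (Fin d) (Fin d) ℂ)‖ ^ (2 * t) ∂μ

/-- key fact: for any fixed unitary `W`, `∫ |tr (W V⁻¹)|^{2t} dV = ∫ |tr V|^{2t} dV`. -/
lemma integral_trace_shift (W : UG d) :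
    ∫ V, ((‖Matrix.trace (star (V : Matrix (Fin d) (Fin d) ℂ) *
        (W : Matrix (Fin d) (Fin d) ℂ))‖ ^ (2 * t) : ℝ) : ℂ) ∂μ = ((Ival d t μ : ℝ) : ℂ) := by
  have := integral_mul_left_eq_self (μ := μ)
    (f := fun V : UG d => ((‖Matrix.trace (star (V : Matrix (Fin d) (Fin d) ℂ) *
        (W : Matrix (Fin d) (Fin d) ℂ))‖ ^ (2 * t) : ℝ) : ℂ)) W
  rw [← this]
  have hpt : ∀ V : UG d, ((‖Matrix.trace (star ((W * V : UG d) : Matrix (Fin d) (Fin d) ℂ) *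
      (W : Matrix (Fin d) (Fin d) ℂ))‖ ^ (2 * t) : ℝ) : ℂ)
      = ((‖Matrix.trace (V : Matrix (Fin d) (Fin d) ℂ)‖ ^ (2 * t) : ℝ) : ℂ) := by
    intro V
    have hW : star ((W * V : UG d) : Matrix (Fin d) (Fin d) ℂ) * (W : Matrix (Fin d) (Fin d) ℂ)
        = star (V : Matrix (Fin d) (Fin d) ℂ) := by
      have hcoe : ((W * V : UG d) : Matrix (Fin d) (Fin d) ℂ)
          = (W : Matrix (Fin d) (Fin d) ℂ) * (V : Matrix (Fin d) (Fin d) ℂ) := rfl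
      rw [hcoe, star_mul, mul_assoc]
      have : star (W : Matrix (Fin d) (Fin d) ℂ) * (W : Matrix (Fin d) (Fin d) ℂ) = 1 :=
        W.prop.1
      rw [this, mul_one]
    rw [hW]
    congr 2
    rw [Matrix.star_eq_conjTranspose, Matrix.trace_conjTranspose]
    exact Complex.norm_conj _
  simp_rw [hpt]
  rw [show ∫ (x : UG d), ((‖Matrix.trace (x : Matrix (Fin d) (Fin d) ℂ)‖ ^ (2*t) : ℝ) : ℂ) ∂μ
      = ((∫ (x : UG d), ‖Matrix.trace (x : Matrix (Fin d) (Fin d) ℂ)‖ ^ (2*t) ∂μ : ℝ) : ℂ)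
    from integral_ofReal]
  rfl


variable {d t μ} in
lemma sum_mon_conjB (W : UG d) :
    ∑ x : Mix d t, mon d t x W * (starRingEnd ℂ) (∫ V, mon d t x V ∂μ) =
      ((Ival d t μ : ℝ) : ℂ) := by
  have h1 : ∀ x : Mix d t, mon d t x W * (starRingEnd ℂ) (∫ V, mon d t x V ∂μ)
      = ∫ V, mon d t x W * (starRingEnd ℂ) (mon d t x V) ∂μ := by
    intro x
    rw [← integral_conj, ← integral_const_mul]
  simp_rw [h1]
  rw [show (∑ x : Mix d t, ∫ V, mon d t x W * (starRingEnd ℂ) (mon d t x V) ∂μ)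
      = ∫ V, ∑ x : Mix d t, mon d t x W * (starRingEnd ℂ) (mon d t x V) ∂μ from
    (integral_finset_sum _ (fun x _ => cont_integrable μ
      (continuous_const.mul ((mon_continuous d t x).star)))).symm]
  simp_rw [key_sum d t W]
  exact integral_trace_shift d t μ W

variable {d t μ} in
lemma sum_BB :
    ∑ x : Mix d t, (∫ U, mon d t x U ∂μ) * (starRingEnd ℂ) (∫ V, mon d t x V ∂μ) =
      ((Ival d t μ : ℝ) : ℂ) := by
  have h1 : ∀ x : Mix d t, (∫ U, mon d t x U ∂μ) * (starRingEnd ℂ) (∫ V, mon d t x V ∂μ)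
      = ∫ U, mon d t x U * (starRingEnd ℂ) (∫ V, mon d t x V ∂μ) ∂μ := by
    intro x; rw [integral_mul_const]
  simp_rw [h1]
  rw [show (∑ x : Mix d t, ∫ U, mon d t x U * (starRingEnd ℂ) (∫ V, mon d t x V ∂μ) ∂μ)
      = ∫ U, ∑ x : Mix d t, mon d t x U * (starRingEnd ℂ) (∫ V, mon d t x V ∂μ) ∂μ from
    (integral_finset_sum _ (fun x _ => cont_integrable μ
      ((mon_continuous d t x).mul continuous_const))).symm]
  have : ∀ U : UG d, ∑ x : Mix d t, mon d t x U * (starRingEnd ℂ) (∫ V, mon d t x V ∂μ)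
      = ((Ival d t μ : ℝ) : ℂ) := fun U => sum_mon_conjB U
  simp_rw [this]
  simp

section grp
variable (G : Type) [Group G] [Fintype G] (ρ : G →* UG d)

variable {d t μ} in
lemma sum_SAB :
    ∑ x : Mix d t, (∑ g : G, mon d t x (ρ g)) * (starRingEnd ℂ) (∫ V, mon d t x V ∂μ) =
      (Fintype.card G : ℂ) * ((Ival d t μ : ℝ) : ℂ) := by
  simp_rw [Finset.sum_mul]
  rw [Finset.sum_comm]
  have : ∀ g : G, ∑ x : Mix d t, mon d t x (ρ g) * (starRingEnd ℂ) (∫ V, mon d t x V ∂μ)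
      = ((Ival d t μ : ℝ) : ℂ) := fun g => sum_mon_conjB (ρ g)
  simp_rw [this, Finset.sum_const, Finset.card_univ, nsmul_eq_mul]

variable {d t} in
lemma coe_rho_inv_mul (g h : G) :
    star ((ρ h : UG d) : Matrix (Fin d) (Fin d) ℂ) * ((ρ g : UG d) : Matrix (Fin d) (Fin d) ℂ)
      = ((ρ (h⁻¹ * g) : UG d) : Matrix (Fin d) (Fin d) ℂ) := by
  have h1 : star ((ρ h : UG d) : Matrix (Fin d) (Fin d) ℂ)
      = (((ρ h)⁻¹ : UG d) : Matrix (Fin d) (Fin d) ℂ) := rfl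
  rw [h1, ← map_inv ρ h, map_mul]
  rfl

variable {d t μ} in
lemma sum_SS :
    ∑ x : Mix d t, (∑ g : G, mon d t x (ρ g)) * (starRingEnd ℂ) (∑ h : G, mon d t x (ρ h)) =
      (Fintype.card G : ℂ) *
        ((∑ g : G, ‖Matrix.trace ((ρ g : UG d) : Matrix (Fin d) (Fin d) ℂ)‖ ^ (2*t) : ℝ) : ℂ) := by
  have expand : ∀ x : Mix d t, (∑ g : G, mon d t x (ρ g)) * (starRingEnd ℂ) (∑ h : G, mon d t x (ρ h))
      = ∑ g : G, ∑ h : G, mon d t x (ρ g) * (starRingEnd ℂ) (mon d t x (ρ h)) := by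
    intro x
    rw [map_sum, Finset.sum_mul_sum]
  simp_rw [expand]
  rw [Finset.sum_comm]
  have swap2 : ∀ g : G, ∑ x : Mix d t, ∑ h : G, mon d t x (ρ g) * (starRingEnd ℂ) (mon d t x (ρ h))
      = ∑ h : G, ∑ x : Mix d t, mon d t x (ρ g) * (starRingEnd ℂ) (mon d t x (ρ h)) :=
    fun g => Finset.sum_comm
  simp_rw [swap2, key_sum d t, coe_rho_inv_mul G ρ]
  have hinner : ∀ h : G, ∑ g : G,
      ((‖Matrix.trace ((ρ (h⁻¹ * g) : UG d) : Matrix (Fin d) (Fin d) ℂ)‖ ^ (2*t) : ℝ) : ℂ)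
      = ((∑ g : G, ‖Matrix.trace ((ρ g : UG d) : Matrix (Fin d) (Fin d) ℂ)‖ ^ (2*t) : ℝ) : ℂ) := by
    intro h
    push_cast
    refine (Fintype.sum_equiv (Equiv.mulLeft h) _ _ ?_).symm
    intro k
    simp
  rw [Finset.sum_comm]
  simp_rw [hinner, Finset.sum_const, Finset.card_univ, nsmul_eq_mul]

end grp
end main

lemma mon_mem (d t : ℕ) (x : Mix d t) : mon d t x ∈ homSpace d t t :=
  Submodule.subset_span ⟨x.1.1, x.1.2, x.2.1, x.2.2, rfl⟩

/-- `|tr U|^{2t}` as a pointwise sum of monomials. -/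
lemma absTrace_eq_sum_mon (d t : ℕ) (U : UG d) :
    ((‖Matrix.trace (U : Matrix (Fin d) (Fin d) ℂ)‖ ^ (2 * t) : ℝ) : ℂ) =
      ∑ y : (Fin t → Fin d) × (Fin t → Fin d), mon d t ((y.1, y.1), (y.2, y.2)) U := by
  set MU := (U : Matrix (Fin d) (Fin d) ℂ)
  set z := Matrix.trace MU with hz
  have h1 : ∑ i : Fin t → Fin d, ∏ k, MU (i k) (i k) = z ^ t := by
    have hz2 : z = ∑ a, MU a a := rfl
    rw [hz2, Fintype.sum_pow (fun a => MU a a) t]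
  have h2 : ∑ p : Fin t → Fin d, ∏ k, (starRingEnd ℂ) (MU (p k) (p k))
      = (starRingEnd ℂ) z ^ t := by
    rw [← map_pow, ← h1, map_sum]
    simp [map_prod]
  rw [Fintype.sum_prod_type]
  simp only [mon]
  rw [← Finset.sum_mul_sum, h1, h2, zpow_conj]

theorem stmt_19 (d t : ℕ)
    (μ : Measure (UG d)) [μ.IsHaarMeasure] [IsProbabilityMeasure μ]
    (G : Type) [Group G] [Fintype G] (ρ : G →* UG d) :
    (∀ f ∈ homSpace d t t,
        (1 / (Fintype.card G : ℂ)) * ∑ g : G, f (ρ g) = ∫ U, f U ∂μ) ↔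
      (1 / (Fintype.card G : ℝ)) *
          ∑ g : G, ‖Matrix.trace ((ρ g : Matrix (Fin d) (Fin d) ℂ))‖ ^ (2 * t)
        = ∫ U, ‖Matrix.trace (U : Matrix (Fin d) (Fin d) ℂ)‖ ^ (2 * t) ∂μ := by
  have hcard0 : (Fintype.card G : ℂ) ≠ 0 :=
    Nat.cast_ne_zero.mpr Fintype.card_ne_zero
  set c : ℂ := (Fintype.card G : ℂ) with hc
  set Sx : ℝ := ∑ g : G, ‖Matrix.trace ((ρ g : Matrix (Fin d) (Fin d) ℂ))‖ ^ (2 * t)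
    with hSx
  have hIc : (∫ U, ((‖Matrix.trace (U : Matrix (Fin d) (Fin d) ℂ)‖ ^ (2*t) : ℝ) : ℂ) ∂μ)
      = ((Ival d t μ : ℝ) : ℂ) := by
    rw [show ∫ (x : UG d), ((‖Matrix.trace (x : Matrix (Fin d) (Fin d) ℂ)‖ ^ (2*t) : ℝ) : ℂ) ∂μ
      = ((∫ (x : UG d), ‖Matrix.trace (x : Matrix (Fin d) (Fin d) ℂ)‖ ^ (2*t) ∂μ : ℝ) : ℂ)
      from integral_ofReal]
    rfl
  constructor
  · -- design → trace condition
    intro hdes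
    have hmem : (fun U : UG d => ((‖Matrix.trace (U : Matrix (Fin d) (Fin d) ℂ)‖ ^ (2 * t) : ℝ) : ℂ))
        ∈ homSpace d t t := by
      have : (fun U : UG d => ((‖Matrix.trace (U : Matrix (Fin d) (Fin d) ℂ)‖ ^ (2 * t) : ℝ) : ℂ))
          = ∑ y : (Fin t → Fin d) × (Fin t → Fin d), mon d t ((y.1, y.1), (y.2, y.2)) := by
        funext U
        rw [absTrace_eq_sum_mon d t U]
        simp [Finset.sum_apply]
      rw [this]
      exact Submodule.sum_mem _ fun y _ => mon_mem d t _
    have := hdes _ hmem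
    rw [hIc] at this
    have hL : ∑ g : G, ((‖Matrix.trace ((ρ g : UG d) : Matrix (Fin d) (Fin d) ℂ)‖ ^ (2*t) : ℝ) : ℂ)
        = ((Sx : ℝ) : ℂ) := by rw [hSx]; push_cast; ring
    rw [hL] at this
    have : ((((1 : ℝ) / (Fintype.card G : ℝ)) * Sx : ℝ) : ℂ) = ((Ival d t μ : ℝ) : ℂ) := by
      push_cast
      rw [← this]
    exact_mod_cast this
  · -- trace condition → design
    intro htr
    have hSxI : (Sx : ℂ) = c * ((Ival d t μ : ℝ) : ℂ) := by
      have hcR : (Fintype.card G : ℝ) ≠ 0 :=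
        Nat.cast_ne_zero.mpr Fintype.card_ne_zero
      have hS : Sx = (Fintype.card G : ℝ) * Ival d t μ := by
        have h' := htr
        field_simp at h'
        unfold Ival
        linarith
      rw [hS]; push_cast; ring
    -- show each monomial is averaged correctly
    have hmono : ∀ x : Mix d t, ∑ g : G, mon d t x (ρ g) = c * ∫ U, mon d t x U ∂μ := by
      set SA : Mix d t → ℂ := fun x => ∑ g : G, mon d t x (ρ g) with hSA
      set B : Mix d t → ℂ := fun x => ∫ U, mon d t x U ∂μ with hB
      have hconjc : (starRingEnd ℂ) c = c := by rw [hc]; simp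
      have hDzero : ∑ x : Mix d t, (SA x - c * B x) * (starRingEnd ℂ) (SA x - c * B x) = 0 := by
        have e1 : ∑ x : Mix d t, SA x * (starRingEnd ℂ) (SA x) = c * ((Sx : ℝ) : ℂ) :=
          sum_SS G ρ
        have e2 : ∑ x : Mix d t, SA x * (starRingEnd ℂ) (B x) = c * ((Ival d t μ : ℝ) : ℂ) :=
          sum_SAB G ρ
        have e3 : ∑ x : Mix d t, B x * (starRingEnd ℂ) (B x) = ((Ival d t μ : ℝ) : ℂ) := sum_BB
        have e4 : ∑ x : Mix d t, B x * (starRingEnd ℂ) (SA x) = c * ((Ival d t μ : ℝ) : ℂ) := by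
          have : ∑ x : Mix d t, B x * (starRingEnd ℂ) (SA x)
              = (starRingEnd ℂ) (∑ x : Mix d t, SA x * (starRingEnd ℂ) (B x)) := by
            rw [map_sum]
            exact Finset.sum_congr rfl fun x _ => by
              rw [map_mul, Complex.conj_conj]; ring
          rw [this, e2, map_mul, hconjc, Complex.conj_ofReal]
        have expand : ∀ x : Mix d t, (SA x - c * B x) * (starRingEnd ℂ) (SA x - c * B x)
            = SA x * (starRingEnd ℂ) (SA x) - c * (SA x * (starRingEnd ℂ) (B x))
              - c * (B x * (starRingEnd ℂ) (SA x)) + c * c * (B x * (starRingEnd ℂ) (B x)) := by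
          intro x
          rw [map_sub, map_mul, hconjc]
          ring
        simp_rw [expand]
        rw [Finset.sum_add_distrib, Finset.sum_sub_distrib, Finset.sum_sub_distrib,
          ← Finset.mul_sum, ← Finset.mul_sum, ← Finset.mul_sum, e1, e2, e3, e4, hSxI]
        ring
      intro x
      have hnn : ∑ x : Mix d t, Complex.normSq (SA x - c * B x) = 0 := by
        have : ((∑ x : Mix d t, Complex.normSq (SA x - c * B x) : ℝ) : ℂ) = 0 := by
          push_cast
          rw [← hDzero]
          exact Finset.sum_congr rfl fun x _ => (Complex.mul_conj _).symm
        exact_mod_cast this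
      have hx0 : Complex.normSq (SA x - c * B x) = 0 := by
        have := (Finset.sum_eq_zero_iff_of_nonneg
          (fun y _ => Complex.normSq_nonneg (SA y - c * B y))).mp hnn x (Finset.mem_univ x)
        exact this
      have : SA x - c * B x = 0 := Complex.normSq_eq_zero.mp hx0
      have := sub_eq_zero.mp this
      exact this
    -- span induction
    intro f hf
    have main : Integrable f μ ∧ ∑ g : G, f (ρ g) = c * ∫ U, f U ∂μ := by
      refine Submodule.span_induction ?_ ?_ ?_ ?_ hf
      · rintro f ⟨i, j, p, q, rfl⟩
        refine ⟨cont_integrable μ (mon_continuous d t ((i,j),(p,q))), ?_⟩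
        exact hmono ((i,j),(p,q))
      · exact ⟨integrable_zero _ _ _, by simp⟩
      · rintro f1 f2 hf1 hf2 ⟨hi1, he1⟩ ⟨hi2, he2⟩
        refine ⟨hi1.add hi2, ?_⟩
        have : ∫ U, (f1 + f2) U ∂μ = (∫ U, f1 U ∂μ) + ∫ U, f2 U ∂μ := integral_add hi1 hi2
        simp only [Pi.add_apply] at this ⊢
        rw [Finset.sum_add_distrib, he1, he2, this]
        ring
      · rintro a f1 hf1 ⟨hi1, he1⟩
        refine ⟨hi1.smul a, ?_⟩
        have : ∫ U, (a • f1) U ∂μ = a • ∫ U, f1 U ∂μ := by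
          simp only [Pi.smul_apply]
          exact integral_smul a f1
        simp only [Pi.smul_apply, smul_eq_mul] at this ⊢
        rw [← Finset.mul_sum, he1, this]
        ring
    rw [main.2]
    field_simp
end
end
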